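/- arXiv:1401.4178 — 2 statements merged into one kernel-verified Lean document; each statement's English description precedes it below -/
import Mathlib

section
/- Suppose 0 < 1/m ≪ ε ≪ 1 and m, k ∈ ℕ with k ≥ 3. Let Q = {V₁,…,V_k} be a (k,m)-equipartition of a vertex set V and C = V₁…V_k a directed cycle. Suppose M is a set of directed matchings partitioned into M₁,…,M_k with |M_i| ≤ m/k, where each M ∈ M_i is an ordered directed matching with e(M) ≤ εm and V(M) ⊆ V_i, and suppose H is a graph on V such that H[V_{i−1}, V_{i+1}] is a 2εm-regular bipartite graph for all i ≤ k. Then there exist an orientation H_dir of H and a balanced extension BE of M with respect to (Q, C) and parameters (2ε, 3), such that each path sequence in BE is obtained from some M ∈ M by adding edges of H_dir. -/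
open Finset

/-- Outdegree of a vertex in a digraph given as a finite set of ordered pairs. -/
def outdegD {V : Type*} [DecidableEq V] (G : Finset (V × V)) (v : V) : ℕ :=
  (G.filter fun e => e.1 = v).card

/-- Indegree of a vertex. -/
def indegD {V : Type*} [DecidableEq V] (G : Finset (V × V)) (v : V) : ℕ :=
  (G.filter fun e => e.2 = v).card

/-- The set of vertices covered by the edges of a digraph. -/
def suppD {V : Type*} [DecidableEq V] (G : Finset (V × V)) : Finset V :=
  G.image Prod.fst ∪ G.image Prod.snd

/-- A path sequence: a union of vertex-disjoint directed paths. -/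
def IsPathSeq {V : Type*} [DecidableEq V] (P : Finset (V × V)) : Prop :=
  (∀ v, outdegD P v ≤ 1 ∧ indegD P v ≤ 1) ∧
  ∀ (n : ℕ) (f : Fin (n + 1) → V),
    ¬((∀ i : Fin n, (f i.castSucc, f i.succ) ∈ P) ∧ (f (Fin.last n), f 0) ∈ P)

/-- A (directed) matching given as a list of edges (an *ordered* directed matching). -/
def IsMatchingL {V : Type*} (L : List (V × V)) : Prop :=
  (∀ e ∈ L, e.1 ≠ e.2) ∧
  L.Pairwise fun e e' => e.1 ≠ e'.1 ∧ e.1 ≠ e'.2 ∧ e.2 ≠ e'.1 ∧ e.2 ≠ e'.2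

/-- `P` is a `W`-extension of the directed matching `M`: each edge of `M` lies on a distinct
directed path of `P` whose final vertex is in `W`. -/
def IsExt {V : Type*} [DecidableEq V] (P M : Finset (V × V)) (W : Finset V) : Prop :=
  M ⊆ P ∧
  (∀ e ∈ M, ∀ w, Relation.ReflTransGen (fun a b => (a, b) ∈ P) e.2 w →
    outdegD P w = 0 → w ∈ W) ∧
  (∀ e ∈ M, ∀ e' ∈ M, e ≠ e' →
    ¬ Relation.ReflTransGen (fun a b => (a, b) ∈ P) e.2 e'.1 ∧
    ¬ Relation.ReflTransGen (fun a b => (a, b) ∈ P) e.2 e'.2)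


/-- Invariant for the greedy choice of balancing edges. -/
def GoodA {V : Type} [DecidableEq V] {q k : ℕ} (cl : Fin q → ZMod k) (Vc : ZMod k → Finset V)
    (Hs : Finset (V × V)) (L : List (Fin q × (V × V))) (g : ℕ → V × V) (a : ℕ)
    (ha : a < L.length) : Prop :=
  (g a ∈ Hs ∧ (g a).1 ∈ Vc (cl (L[a]'ha).1 - 1) ∧ (g a).2 ∈ Vc (cl (L[a]'ha).1 + 1)) ∧
  ∀ b (hb : b < L.length), b < a →
    g b ≠ g a ∧ g b ≠ ((g a).2, (g a).1) ∧
    ((L[b]'hb).1 = (L[a]'ha).1 → (g b).1 ≠ (g a).1 ∧ (g b).2 ≠ (g a).2)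

lemma GoodA_congr {V : Type} [DecidableEq V] {q k : ℕ} {cl : Fin q → ZMod k}
    {Vc : ZMod k → Finset V} {Hs : Finset (V × V)} {L : List (Fin q × (V × V))}
    {g₁ g₂ : ℕ → V × V} {a : ℕ} {ha : a < L.length}
    (hgg : ∀ x, x ≤ a → g₁ x = g₂ x) (h : GoodA cl Vc Hs L g₁ a ha) :
    GoodA cl Vc Hs L g₂ a ha := by
  obtain ⟨h1, h2⟩ := h
  refine ⟨by rw [← hgg a le_rfl]; exact h1, fun b hb hba => ?_⟩
  have := h2 b hb hba
  rwa [hgg b hba.le, hgg a le_rfl] at this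

lemma greedy {V : Type} [DecidableEq V] {k q m d : ℕ} {ε : ℝ}
    (hk : 3 ≤ k) (hε : 0 < ε) (hε1 : ε ≤ 1/100) (hm : 1 ≤ m)
    (Vc : ZMod k → Finset V) (hdisj : ∀ i j, i ≠ j → Disjoint (Vc i) (Vc j))
    (hcard : ∀ i, (Vc i).card = m)
    (M : Fin q → List (V × V)) (cl : Fin q → ZMod k)
    (hlen : ∀ s, ((M s).length : ℝ) ≤ ε * m)
    (hclcount : ∀ i, (((Finset.univ : Finset (Fin q)).filter fun s => cl s = i).card : ℝ)
      ≤ (m : ℝ) / k)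
    (Hs : Finset (V × V)) (hsymm : ∀ e ∈ Hs, (e.2, e.1) ∈ Hs)
    (hd : (d : ℝ) = 2 * ε * m)
    (hreg : ∀ i : ZMod k,
      (∀ v ∈ Vc (i - 1), (Hs.filter fun e => e.1 = v ∧ e.2 ∈ Vc (i + 1)).card = d) ∧
      (∀ v ∈ Vc (i + 1), (Hs.filter fun e => e.1 = v ∧ e.2 ∈ Vc (i - 1)).card = d))
    (L : List (Fin q × (V × V))) (hnd : L.Nodup)
    (hLsub : ∀ p ∈ L, p.2 ∈ (M p.1).toFinset) :
    ∃ g : ℕ → V × V, ∀ a (ha : a < L.length), GoodA cl Vc Hs L g a ha := by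
  classical
  have hm0 : (0:ℝ) < m := by exact_mod_cast Nat.lt_of_lt_of_le Nat.zero_lt_one hm
  have hkR : (3:ℝ) ≤ k := by exact_mod_cast hk
  have hVdis : ∀ {j j' : ZMod k} {v : V}, v ∈ Vc j → v ∈ Vc j' → j = j' := by
    intro j j' v hv hv'
    by_contra hne
    exact (Finset.disjoint_left.mp (hdisj j j' hne)) hv hv'
  suffices hcl : ∀ n : ℕ, ∃ g : ℕ → V × V, ∀ a, a < n → ∀ ha : a < L.length,
      GoodA cl Vc Hs L g a ha by
    obtain ⟨g, hg⟩ := hcl L.length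
    exact ⟨g, fun a ha => hg a ha ha⟩
  intro n
  induction n with
  | zero =>
    have : (Vc 0).Nonempty := Finset.card_pos.mp (by rw [hcard]; omega)
    obtain ⟨v0, _⟩ := this
    exact ⟨fun _ => (v0, v0), fun a ha => absurd ha (Nat.not_lt_zero a)⟩
  | succ n ih =>
    obtain ⟨g, hg⟩ := ih
    by_cases hn : n < L.length
    swap
    · exact ⟨g, fun a ha ha' => hg a (by omega) ha'⟩
    set p := L[n]'hn with hp
    set i := cl p.1 with hi
    set tk : ℕ → Fin q × (V × V) := fun b => L.getD b p with htkdef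
    have htk : ∀ b (hb : b < L.length), tk b = L[b]'hb := fun b hb => List.getD_eq_getElem L p hb
    have hgb1 : ∀ b, b < n →
        g b ∈ Hs ∧ (g b).1 ∈ Vc (cl (tk b).1 - 1) ∧ (g b).2 ∈ Vc (cl (tk b).1 + 1) := by
      intro b hb
      have hbL : b < L.length := lt_trans hb hn
      have := (hg b hb hbL).1
      rwa [htk b hbL]
    have hinj : ∀ b b', b < n → b' < n → tk b = tk b' → b = b' := by
      intro b b' hb hb' he
      have hbL : b < L.length := lt_trans hb hn
      have hbL' : b' < L.length := lt_trans hb' hn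
      rw [htk b hbL, htk b' hbL'] at he
      exact (List.Nodup.getElem_inj_iff hnd).mp he
    set S := Hs.filter (fun e => e.1 ∈ Vc (i - 1) ∧ e.2 ∈ Vc (i + 1)) with hSdef
    have hScard : S.card = m * d := by
      have h1 : S.card = ∑ v ∈ Vc (i - 1), (S.filter fun e => e.1 = v).card :=
        Finset.card_eq_sum_card_fiberwise (fun e he => (mem_filter.1 he).2.1)
      have h2 : ∀ v ∈ Vc (i - 1), (S.filter fun e => e.1 = v).card = d := by
        intro v hv
        have : S.filter (fun e => e.1 = v) = Hs.filter (fun e => e.1 = v ∧ e.2 ∈ Vc (i + 1)) := by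
          ext e
          simp only [hSdef, mem_filter, and_assoc]
          constructor
          · rintro ⟨h1, h2, h3, h4⟩; exact ⟨h1, h4, h3⟩
          · rintro ⟨h1, h2, h3⟩; exact ⟨h1, h2 ▸ hv, h3, h2⟩
        rw [this, (hreg i).1 v hv]
      rw [h1, Finset.sum_congr rfl h2, Finset.sum_const, hcard, smul_eq_mul]
    set P : (V × V) → Prop := fun e => ∃ b, b < n ∧ (g b = e ∨ g b = (e.2, e.1) ∨
      ((tk b).1 = p.1 ∧ ((g b).1 = e.1 ∨ (g b).2 = e.2))) with hPdef
    set Bad := S.filter P with hBaddef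
    set sameS := (Finset.range n).filter (fun b => (tk b).1 = p.1) with hsameSdef
    set F1 := sameS.image (fun b => (g b).1) with hF1def
    set F2 := sameS.image (fun b => (g b).2) with hF2def
    set bs := (Finset.range n).filter (fun b => cl (tk b).1 = i ∨ cl (tk b).1 = i + 2) with hbsdef
    set Bad1 := F1.biUnion (fun v => Hs.filter fun e => e.1 = v ∧ e.2 ∈ Vc (i + 1)) with hB1def
    set Bad2 := F2.biUnion (fun v => Hs.filter fun e => e.2 = v ∧ e.1 ∈ Vc (i - 1)) with hB2def
    set Bad3 := bs.biUnion (fun b => ({g b, ((g b).2, (g b).1)} : Finset (V × V))) with hB3def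
    have hsub : Bad ⊆ (Bad1 ∪ Bad2) ∪ Bad3 := by
      intro e he
      obtain ⟨heS, b, hbn, hcase⟩ := mem_filter.1 he
      obtain ⟨heH, he1, he2⟩ := mem_filter.1 heS
      have hb1 := hgb1 b hbn
      rcases hcase with h | h | ⟨hsame, h'⟩
      · apply Finset.mem_union_right
        have hcc : cl (tk b).1 - 1 = i - 1 := hVdis (h ▸ hb1.2.1) he1
        have : cl (tk b).1 = i := by linear_combination hcc
        refine Finset.mem_biUnion.mpr ⟨b, Finset.mem_filter.mpr ⟨Finset.mem_range.mpr hbn,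
          Or.inl this⟩, ?_⟩
        rw [h]; exact Finset.mem_insert_self _ _
      · apply Finset.mem_union_right
        have hcc : cl (tk b).1 - 1 = i + 1 := by
          have : (g b).1 = e.2 := by rw [h]
          exact hVdis (this ▸ hb1.2.1) he2
        have : cl (tk b).1 = i + 2 := by linear_combination hcc
        refine Finset.mem_biUnion.mpr ⟨b, Finset.mem_filter.mpr ⟨Finset.mem_range.mpr hbn,
          Or.inr this⟩, ?_⟩
        have : e = ((g b).2, (g b).1) := by rw [h]
        rw [this]
        exact Finset.mem_insert_of_mem (Finset.mem_singleton_self _)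
      · apply Finset.mem_union_left
        rcases h' with h' | h'
        · apply Finset.mem_union_left
          refine Finset.mem_biUnion.mpr ⟨(g b).1, Finset.mem_image.mpr ⟨b,
            Finset.mem_filter.mpr ⟨Finset.mem_range.mpr hbn, hsame⟩, rfl⟩,
            Finset.mem_filter.mpr ⟨heH, h'.symm, he2⟩⟩
        · apply Finset.mem_union_right
          refine Finset.mem_biUnion.mpr ⟨(g b).2, Finset.mem_image.mpr ⟨b,
            Finset.mem_filter.mpr ⟨Finset.mem_range.mpr hbn, hsame⟩, rfl⟩,
            Finset.mem_filter.mpr ⟨heH, h'.symm, he1⟩⟩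
    have hsameS : sameS.card ≤ (M p.1).toFinset.card := by
      apply Finset.card_le_card_of_injOn (fun b => (tk b).2)
      · intro b hb
        obtain ⟨hbn, hbs⟩ := Finset.mem_filter.1 hb
        have hbn' := Finset.mem_range.1 hbn
        have hbL : b < L.length := lt_trans hbn' hn
        have hmem : tk b ∈ L := by rw [htk b hbL]; exact List.getElem_mem _
        have := hLsub (tk b) hmem
        rwa [hbs] at this
      · intro b hb b' hb' he
        obtain ⟨hbn, hbs⟩ := Finset.mem_filter.1 hb
        obtain ⟨hbn', hbs'⟩ := Finset.mem_filter.1 hb'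
        exact hinj b b' (Finset.mem_range.1 hbn) (Finset.mem_range.1 hbn')
          (Prod.ext (hbs.trans hbs'.symm) he)
    have hF1A : ∀ v ∈ F1, v ∈ Vc (i - 1) := by
      intro v hv
      obtain ⟨b, hb, rfl⟩ := Finset.mem_image.1 hv
      obtain ⟨hbn, hbs⟩ := Finset.mem_filter.1 hb
      have := (hgb1 b (Finset.mem_range.1 hbn)).2.1
      rwa [hbs] at this
    have hF2B : ∀ v ∈ F2, v ∈ Vc (i + 1) := by
      intro v hv
      obtain ⟨b, hb, rfl⟩ := Finset.mem_image.1 hv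
      obtain ⟨hbn, hbs⟩ := Finset.mem_filter.1 hb
      have := (hgb1 b (Finset.mem_range.1 hbn)).2.2
      rwa [hbs] at this
    have hBad1 : Bad1.card ≤ sameS.card * d := by
      calc Bad1.card ≤ ∑ v ∈ F1, (Hs.filter fun e => e.1 = v ∧ e.2 ∈ Vc (i + 1)).card :=
            Finset.card_biUnion_le
        _ = ∑ v ∈ F1, d := Finset.sum_congr rfl (fun v hv => (hreg i).1 v (hF1A v hv))
        _ = F1.card * d := by rw [Finset.sum_const, smul_eq_mul]
        _ ≤ sameS.card * d := Nat.mul_le_mul_right d Finset.card_image_le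
    have hswapcard : ∀ v ∈ Vc (i + 1),
        (Hs.filter fun e => e.2 = v ∧ e.1 ∈ Vc (i - 1)).card = d := by
      intro v hv
      rw [← (hreg i).2 v hv]
      have himg : Hs.filter (fun e => e.2 = v ∧ e.1 ∈ Vc (i - 1))
          = (Hs.filter (fun e => e.1 = v ∧ e.2 ∈ Vc (i - 1))).image Prod.swap := by
        ext e
        simp only [Finset.mem_filter, Finset.mem_image]
        constructor
        · rintro ⟨h1, h2, h3⟩
          exact ⟨(e.2, e.1), ⟨hsymm e h1, h2, h3⟩, rfl⟩
        · rintro ⟨a, ⟨h1, h2, h3⟩, rfl⟩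
          exact ⟨hsymm a h1, h2, h3⟩
      rw [himg, Finset.card_image_of_injective _ Prod.swap_injective]
    have hBad2 : Bad2.card ≤ sameS.card * d := by
      calc Bad2.card ≤ ∑ v ∈ F2, (Hs.filter fun e => e.2 = v ∧ e.1 ∈ Vc (i - 1)).card :=
            Finset.card_biUnion_le
        _ = ∑ v ∈ F2, d := Finset.sum_congr rfl (fun v hv => hswapcard v (hF2B v hv))
        _ = F2.card * d := by rw [Finset.sum_const, smul_eq_mul]
        _ ≤ sameS.card * d := Nat.mul_le_mul_right d Finset.card_image_le
    have hBad3 : Bad3.card ≤ 2 * bs.card := by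
      calc Bad3.card ≤ ∑ b ∈ bs, ({g b, ((g b).2, (g b).1)} : Finset (V × V)).card :=
            Finset.card_biUnion_le
        _ ≤ ∑ _b ∈ bs, 2 := Finset.sum_le_sum (fun b _ => (Finset.card_insert_le _ _).trans (by simp))
        _ = 2 * bs.card := by rw [Finset.sum_const, smul_eq_mul, mul_comm]
    have hbsR : (bs.card : ℝ) ≤ 2 * ((m : ℝ) / k) * (ε * m) := by
      set TT := ((Finset.univ : Finset (Fin q)).filter
          (fun s' => cl s' = i ∨ cl s' = i + 2)).biUnion
          (fun s' => ((M s').toFinset).image fun e => (s', e)) with hTTdef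
      have h1 : bs.card ≤ TT.card := by
        apply Finset.card_le_card_of_injOn tk
        · intro b hb
          obtain ⟨hbn, hbc⟩ := Finset.mem_filter.1 hb
          have hbn' := Finset.mem_range.1 hbn
          have hbL : b < L.length := lt_trans hbn' hn
          have hmem : tk b ∈ L := by rw [htk b hbL]; exact List.getElem_mem _
          refine Finset.mem_biUnion.mpr ⟨(tk b).1, Finset.mem_filter.mpr ⟨Finset.mem_univ _, hbc⟩,
            Finset.mem_image.mpr ⟨(tk b).2, hLsub _ hmem, rfl⟩⟩
        · intro b hb b' hb' he
          exact hinj b b' (Finset.mem_range.1 (Finset.mem_filter.1 hb).1)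
            (Finset.mem_range.1 (Finset.mem_filter.1 hb').1) he
      have h2 : TT.card ≤ ∑ s' ∈ (Finset.univ : Finset (Fin q)).filter
          (fun s' => cl s' = i ∨ cl s' = i + 2), (M s').toFinset.card := by
        calc TT.card ≤ ∑ s' ∈ _, (((M s').toFinset).image fun e => (s', e)).card :=
              Finset.card_biUnion_le
          _ ≤ _ := Finset.sum_le_sum (fun s' _ => Finset.card_image_le)
      have h3 : ((∑ s' ∈ (Finset.univ : Finset (Fin q)).filter
          (fun s' => cl s' = i ∨ cl s' = i + 2), (M s').toFinset.card : ℕ) : ℝ)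
          ≤ (((Finset.univ : Finset (Fin q)).filter
            (fun s' => cl s' = i ∨ cl s' = i + 2)).card : ℝ) * (ε * m) := by
        push_cast
        calc (∑ s' ∈ (Finset.univ : Finset (Fin q)).filter
            (fun s' => cl s' = i ∨ cl s' = i + 2), ((M s').toFinset.card : ℝ))
            ≤ ∑ s' ∈ (Finset.univ : Finset (Fin q)).filter
              (fun s' => cl s' = i ∨ cl s' = i + 2), (ε * m) := by
              apply Finset.sum_le_sum
              intro s' _
              exact le_trans (by exact_mod_cast (M s').toFinset_card_le) (hlen s')
          _ = _ := by rw [Finset.sum_const, nsmul_eq_mul]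
      have h4 : (((Finset.univ : Finset (Fin q)).filter
          (fun s' => cl s' = i ∨ cl s' = i + 2)).card : ℝ) ≤ 2 * ((m : ℝ) / k) := by
        rw [Finset.filter_or]
        calc ((((Finset.univ : Finset (Fin q)).filter (fun s' => cl s' = i)) ∪
            ((Finset.univ : Finset (Fin q)).filter (fun s' => cl s' = i + 2))).card : ℝ)
            ≤ ((((Finset.univ : Finset (Fin q)).filter (fun s' => cl s' = i)).card : ℝ) +
              (((Finset.univ : Finset (Fin q)).filter (fun s' => cl s' = i + 2)).card : ℝ)) := by
              exact_mod_cast Finset.card_union_le _ _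
          _ ≤ (m : ℝ) / k + (m : ℝ) / k := add_le_add (hclcount i) (hclcount (i + 2))
          _ = 2 * ((m : ℝ) / k) := by ring
      have hεm : (0:ℝ) ≤ ε * m := le_of_lt (mul_pos hε hm0)
      calc (bs.card : ℝ) ≤ (TT.card : ℝ) := by exact_mod_cast h1
        _ ≤ _ := by exact_mod_cast le_trans (Nat.cast_le.mpr h2) h3
        _ ≤ 2 * ((m : ℝ) / k) * (ε * m) := by
            apply mul_le_mul_of_nonneg_right h4 hεm
    have hsameSR : (sameS.card : ℝ) ≤ ε * m := by
      calc (sameS.card : ℝ) ≤ ((M p.1).toFinset.card : ℝ) := by exact_mod_cast hsameS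
        _ ≤ ((M p.1).length : ℝ) := by exact_mod_cast (M p.1).toFinset_card_le
        _ ≤ ε * m := hlen p.1
    have hBadlt : Bad.card < S.card := by
      have hBc : (Bad.card : ℝ) ≤ (sameS.card : ℝ) * d + (sameS.card : ℝ) * d
          + 2 * (bs.card : ℝ) := by
        have c1 : Bad.card ≤ Bad1.card + Bad2.card + Bad3.card := by
          calc Bad.card ≤ ((Bad1 ∪ Bad2) ∪ Bad3).card := Finset.card_le_card hsub
            _ ≤ (Bad1 ∪ Bad2).card + Bad3.card := Finset.card_union_le _ _
            _ ≤ Bad1.card + Bad2.card + Bad3.card :=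
                Nat.add_le_add_right (Finset.card_union_le _ _) _
        have := le_trans c1 (Nat.add_le_add (Nat.add_le_add hBad1 hBad2) hBad3)
        calc (Bad.card : ℝ) ≤ ((sameS.card * d + sameS.card * d + 2 * bs.card : ℕ) : ℝ) := by
              exact_mod_cast this
          _ = (sameS.card : ℝ) * d + (sameS.card : ℝ) * d + 2 * (bs.card : ℝ) := by push_cast; ring
      have hd0 : (0:ℝ) ≤ d := Nat.cast_nonneg d
      have hmk : (m : ℝ) / k ≤ (m : ℝ) / 3 :=
        div_le_div_of_nonneg_left (le_of_lt hm0) (by norm_num) hkR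
      have key : (Bad.card : ℝ) < (S.card : ℝ) := by
        rw [hScard]
        push_cast
        have h5 : (Bad.card : ℝ) ≤ (ε * m) * d + (ε * m) * d + 2 * (2 * ((m : ℝ) / 3) * (ε * m)) := by
          have := mul_le_mul_of_nonneg_right hsameSR hd0
          have h6 : 2 * ((m : ℝ) / k) * (ε * m) ≤ 2 * ((m : ℝ) / 3) * (ε * m) := by
            apply mul_le_mul_of_nonneg_right _ (le_of_lt (mul_pos hε hm0))
            linarith
          linarith [hBc, hbsR]
        rw [hd] at h5 ⊢
        nlinarith [mul_pos hε (mul_pos hm0 hm0), hε1, hε, hm0]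
      exact_mod_cast key
    have hSBne : (S \ Bad).Nonempty := by
      rw [← Finset.card_pos, Finset.card_sdiff_of_subset (Finset.filter_subset _ _)]
      have h' : (S.filter P).card < S.card := hBadlt
      omega
    obtain ⟨eStar, heStar⟩ := hSBne
    obtain ⟨heS, heB⟩ := Finset.mem_sdiff.1 heStar
    have hNP : ¬ P eStar := fun hp => heB (Finset.mem_filter.2 ⟨heS, hp⟩)
    obtain ⟨heH, he1, he2⟩ := Finset.mem_filter.1 heS
    refine ⟨Function.update g n eStar, ?_⟩
    intro a han ha'
    rcases Nat.lt_succ_iff_lt_or_eq.mp han with h | rfl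
    · refine GoodA_congr (fun x hx => ?_) (hg a h ha')
      exact (Function.update_of_ne (by omega) _ _).symm
    · have hgn : Function.update g a eStar a = eStar := Function.update_self _ _ _
      constructor
      · rw [hgn]; exact ⟨heH, he1, he2⟩
      · intro b hbL hbn
        have hgb : Function.update g a eStar b = g b := Function.update_of_ne (by omega) _ _
        rw [hgn, hgb]
        have htkb : (tk b).1 = (L[b]'hbL).1 := by rw [htk b hbL]
        refine ⟨?_, ?_, ?_⟩
        · intro hcon; exact hNP ⟨b, hbn, Or.inl hcon⟩
        · intro hcon; exact hNP ⟨b, hbn, Or.inr (Or.inl hcon)⟩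
        · intro heq
          constructor
          · intro hcon
            exact hNP ⟨b, hbn, Or.inr (Or.inr ⟨htkb.trans heq, Or.inl hcon⟩)⟩
          · intro hcon
            exact hNP ⟨b, hbn, Or.inr (Or.inr ⟨htkb.trans heq, Or.inr hcon⟩)⟩

/-- Lemma 5.4: constructing a balanced extension of a set of ordered directed matchings,
using the edges of a suitable orientation of an auxiliary graph `H`. -/
theorem stmt10 :
    ∃ ε₁ : ℝ, 0 < ε₁ ∧ ∀ ε : ℝ, 0 < ε → ε ≤ ε₁ →
    ∃ m₀ : ℕ, ∀ m : ℕ, m₀ ≤ m →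
    ∀ k : ℕ, 3 ≤ k →
    ∀ (V : Type) [inst : DecidableEq V], ∀ (Vc : ZMod k → Finset V),
      (∀ i j, i ≠ j → Disjoint (Vc i) (Vc j)) → (∀ i, (Vc i).card = m) →
    ∀ (q : ℕ) (M : Fin q → List (V × V)) (cl : Fin q → ZMod k),
      -- (i): the partition of the set of ordered directed matchings
      (∀ s, IsMatchingL (M s)) →
      (∀ s, ((M s).length : ℝ) ≤ ε * m) →
      (∀ s, ∀ e ∈ M s, e.1 ∈ Vc (cl s) ∧ e.2 ∈ Vc (cl s)) →
      (∀ i, (((Finset.univ : Finset (Fin q)).filter fun s => cl s = i).card : ℝ)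
        ≤ (m : ℝ) / k) →
    ∀ (H : Finset (V × V)) (d : ℕ),
      -- H is an (undirected) graph on V, given symmetrically
      (∀ e ∈ H, (e.2, e.1) ∈ H) → (∀ e ∈ H, e.1 ≠ e.2) →
      (d : ℝ) = 2 * ε * m →
      -- (ii): H[V_{i-1}, V_{i+1}] is 2εm-regular
      (∀ i : ZMod k,
        (∀ v ∈ Vc (i - 1), (H.filter fun e => e.1 = v ∧ e.2 ∈ Vc (i + 1)).card = d) ∧
        (∀ v ∈ Vc (i + 1), (H.filter fun e => e.1 = v ∧ e.2 ∈ Vc (i - 1)).card = d)) →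
      -- conclusion: an orientation of H and a balanced extension with parameters (2ε, 3)
      ∃ Hdir : Finset (V × V),
        Hdir ⊆ H ∧ (∀ e ∈ H, ((e.1, e.2) ∈ Hdir ↔ (e.2, e.1) ∉ Hdir)) ∧
        ∃ (PS : Fin q → Finset (V × V)) (idx : Fin q → ZMod k),
          -- each path sequence extends its matching by edges of Hdir
          (∀ s, (M s).toFinset ⊆ PS s ∧ PS s \ (M s).toFinset ⊆ Hdir) ∧
          -- (BE1)
          (∀ s, IsPathSeq (PS s)) ∧
          (∀ s i, ((PS s).filter fun e => e.1 ∈ Vc i).card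
            = ((PS s).filter fun e => e.2 ∈ Vc (i + 1)).card) ∧
          (∀ s t, s ≠ t →
            Disjoint (PS s \ (M s).toFinset) (PS t \ (M t).toFinset)) ∧
          -- (BE2)
          (∀ s, IsExt (PS s) (M s).toFinset (Vc (idx s))) ∧
          (∀ i, (((Finset.univ : Finset (Fin q)).filter fun s => idx s = i).card : ℝ)
            ≤ 3 * m / k) ∧
          -- (BE3)
          (∀ s i, ((suppD (PS s) ∩ Vc i).card : ℝ) ≤ 2 * ε * m) ∧
          (∀ i, (((Finset.univ : Finset (Fin q)).filter
              fun s => (suppD (PS s) ∩ Vc i).Nonempty).card : ℝ) ≤ 3 * m / k) := by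
  classical
  refine ⟨1/100, by norm_num, ?_⟩
  intro ε hε hε1
  refine ⟨1, ?_⟩
  intro m hm k hk V inst Vc hdisj hcard q M cl hmatch hlen hMin hclcount Hs d hsymm hloop hd hreg
  have hm0 : (0:ℝ) < m := by exact_mod_cast Nat.lt_of_lt_of_le Nat.zero_lt_one hm
  have hk1 : 1 < k := by omega
  have hkNZ : NeZero k := ⟨by omega⟩
  have hone : (1 : ZMod k) ≠ 0 := by
    intro hcon
    have hdvd := (ZMod.natCast_eq_zero_iff 1 k).mp (by exact_mod_cast hcon)
    have := Nat.le_of_dvd one_pos hdvd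
    omega
  have htwo : (2 : ZMod k) ≠ 0 := by
    intro hcon
    have hdvd := (ZMod.natCast_eq_zero_iff 2 k).mp (by exact_mod_cast hcon)
    have := Nat.le_of_dvd (by norm_num) hdvd
    omega
  have hVdis : ∀ {j j' : ZMod k} {v : V}, v ∈ Vc j → v ∈ Vc j' → j = j' := by
    intro j j' v hv hv'
    by_contra hne
    exact (Finset.disjoint_left.mp (hdisj j j' hne)) hv hv'
  have hz1 : ∀ j : ZMod k, j - 1 ≠ j := fun j hh => hone (by linear_combination -hh)
  have hz2 : ∀ j : ZMod k, j + 1 ≠ j := fun j hh => hone (by linear_combination hh)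
  have hz3 : ∀ j : ZMod k, j - 1 ≠ j + 1 := fun j hh => htwo (by linear_combination -hh)
  -- the tasks
  set tasks : Finset (Fin q × (V × V)) :=
    (Finset.univ : Finset (Fin q)).biUnion
      (fun s => ((M s).toFinset).image (fun e => (s, e))) with htasksdef
  have hmemtasks : ∀ (s : Fin q) (e : V × V), (s, e) ∈ tasks ↔ e ∈ (M s).toFinset := by
    intro s e
    simp only [htasksdef, Finset.mem_biUnion, Finset.mem_image, Finset.mem_univ, true_and]
    constructor
    · rintro ⟨s', e', he', heq⟩
      obtain ⟨rfl, rfl⟩ := Prod.mk.injEq .. ▸ heq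
      exact he'
    · intro h
      exact ⟨s, e, h, rfl⟩
  set L := tasks.toList with hLdef
  have hnd : L.Nodup := Finset.nodup_toList _
  have hLsub : ∀ p ∈ L, p.2 ∈ (M p.1).toFinset := by
    intro p hp
    have : p ∈ tasks := Finset.mem_toList.mp hp
    exact (hmemtasks p.1 p.2).mp this
  obtain ⟨g, hg⟩ := greedy hk hε hε1 hm Vc hdisj hcard M cl hlen hclcount Hs hsymm hd hreg
    L hnd hLsub
  set idxL : (Fin q × (V × V)) → ℕ := fun pp => List.idxOf pp L
    with hidxLdef
  set h : (Fin q × (V × V)) → V × V := fun pp => g (idxL pp) with hhdef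
  have hK1 : ∀ pp ∈ tasks, h pp ∈ Hs ∧ (h pp).1 ∈ Vc (cl pp.1 - 1)
      ∧ (h pp).2 ∈ Vc (cl pp.1 + 1) := by
    intro pp hpp
    have hmem : pp ∈ L := Finset.mem_toList.mpr hpp
    have hlt : idxL pp < L.length := List.idxOf_lt_length_iff.mpr hmem
    have hgetl : L[idxL pp]'hlt = pp := List.getElem_idxOf hlt
    have := (hg _ hlt).1
    rwa [hgetl] at this
  have hK2 : ∀ pp ∈ tasks, ∀ pp' ∈ tasks, pp ≠ pp' →
      (h pp ≠ h pp' ∧ h pp ≠ ((h pp').2, (h pp').1)) ∧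
      (pp.1 = pp'.1 → (h pp).1 ≠ (h pp').1 ∧ (h pp).2 ≠ (h pp').2) := by
    intro pp hpp pp' hpp' hne
    have hmem : pp ∈ L := Finset.mem_toList.mpr hpp
    have hmem' : pp' ∈ L := Finset.mem_toList.mpr hpp'
    have hlt : idxL pp < L.length := List.idxOf_lt_length_iff.mpr hmem
    have hlt' : idxL pp' < L.length := List.idxOf_lt_length_iff.mpr hmem'
    have hget : L[idxL pp]'hlt = pp := List.getElem_idxOf hlt
    have hget' : L[idxL pp']'hlt' = pp' := List.getElem_idxOf hlt'
    have hidxne : idxL pp ≠ idxL pp' := by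
      intro hcon
      apply hne
      rw [← hget, ← hget']
      congr 1
    rcases lt_or_gt_of_ne hidxne with hlt2 | hlt2
    · have := (hg _ hlt').2 (idxL pp) hlt hlt2
      rw [hget, hget'] at this
      exact ⟨⟨this.1, this.2.1⟩, this.2.2⟩
    · have := (hg _ hlt).2 (idxL pp') hlt' hlt2
      rw [hget, hget'] at this
      refine ⟨⟨this.1.symm, ?_⟩, fun heq => ⟨(this.2.2 heq.symm).1.symm, (this.2.2 heq.symm).2.symm⟩⟩
      intro hcon
      exact this.2.1
        (by rw [show g (idxL pp) = ((g (idxL pp')).2, (g (idxL pp')).1) from hcon])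
  have htaskmem : ∀ (s : Fin q), ∀ e ∈ (M s).toFinset, ((s, e) : Fin q × (V × V)) ∈ tasks :=
    fun s e he => (hmemtasks s e).mpr he
  set Es : Fin q → Finset (V × V) := fun s => ((M s).toFinset).image (fun e => h (s, e))
    with hEsdef
  set PS : Fin q → Finset (V × V) := fun s => (M s).toFinset ∪ Es s with hPSdef
  have hEsmem : ∀ s, ∀ c ∈ Es s, c ∈ Hs ∧ c.1 ∈ Vc (cl s - 1) ∧ c.2 ∈ Vc (cl s + 1) := by
    intro s c hc
    obtain ⟨e, he, rfl⟩ := Finset.mem_image.1 hc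
    exact hK1 (s, e) (htaskmem s e he)
  have hMsV : ∀ s, ∀ e ∈ (M s).toFinset, e.1 ∈ Vc (cl s) ∧ e.2 ∈ Vc (cl s) :=
    fun s e he => hMin s e (List.mem_toFinset.mp he)
  have hMne : ∀ s, ∀ e ∈ (M s).toFinset, e.1 ≠ e.2 :=
    fun s e he => (hmatch s).1 e (List.mem_toFinset.mp he)
  have hMpair : ∀ s, ∀ e ∈ (M s).toFinset, ∀ e' ∈ (M s).toFinset, e ≠ e' →
      e.1 ≠ e'.1 ∧ e.1 ≠ e'.2 ∧ e.2 ≠ e'.1 ∧ e.2 ≠ e'.2 := by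
    intro s e he e' he' hne
    have hsymR : Symmetric (fun (x y : V × V) =>
        x.1 ≠ y.1 ∧ x.1 ≠ y.2 ∧ x.2 ≠ y.1 ∧ x.2 ≠ y.2) := by
      rintro x y ⟨a, b, c, dd⟩
      exact ⟨a.symm, c.symm, b.symm, dd.symm⟩
    haveI : Std.Symm (fun (x y : V × V) =>
        x.1 ≠ y.1 ∧ x.1 ≠ y.2 ∧ x.2 ≠ y.1 ∧ x.2 ≠ y.2) := ⟨fun a b hh => hsymR hh⟩
    exact ((hmatch s).2.forall) (List.mem_toFinset.mp he) (List.mem_toFinset.mp he') hne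
  have hMEdisj : ∀ s, Disjoint (M s).toFinset (Es s) := by
    intro s
    rw [Finset.disjoint_left]
    intro e he hecon
    exact hz1 (cl s) (hVdis (hEsmem s e hecon).2.1 (hMsV s e he).1)
  have hEcard : ∀ s, (Es s).card = (M s).toFinset.card := by
    intro s
    apply Finset.card_image_of_injOn
    intro e he e' he' heq
    by_contra hne
    exact ((hK2 (s, e) (htaskmem s e he) (s, e') (htaskmem s e' he')
      (fun hc => hne (congrArg Prod.snd hc))).1).1 heq
  have hEdisjV : ∀ s, ∀ c ∈ Es s, ∀ c' ∈ Es s, c ≠ c' → c.1 ≠ c'.1 ∧ c.2 ≠ c'.2 := by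
    intro s c hc c' hc' hne
    obtain ⟨e, he, rfl⟩ := Finset.mem_image.1 hc
    obtain ⟨e', he', rfl⟩ := Finset.mem_image.1 hc'
    have hpne : ((s, e) : Fin q × (V × V)) ≠ (s, e') := by
      intro hcon
      exact hne (congrArg h hcon)
    exact (hK2 (s, e) (htaskmem s e he) (s, e') (htaskmem s e' he') hpne).2 rfl
  have hcons : ∀ s, ∀ e ∈ PS s, ∀ e' ∈ PS s, e.2 ≠ e'.1 := by
    intro s e he e' he' hcon
    rcases Finset.mem_union.1 he with heM | heE
    · rcases Finset.mem_union.1 he' with heM' | heE'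
      · by_cases hee : e = e'
        · subst hee
          exact hMne s e heM hcon.symm
        · exact (hMpair s e heM e' heM' hee).2.2.1 hcon
      · have h1 : e'.1 ∈ Vc (cl s) := hcon ▸ (hMsV s e heM).2
        exact hz1 (cl s) (hVdis (hEsmem s e' heE').2.1 h1)
    · rcases Finset.mem_union.1 he' with heM' | heE'
      · have h1 : e'.1 ∈ Vc (cl s + 1) := hcon ▸ (hEsmem s e heE).2.2
        exact hz2 (cl s) (hVdis h1 (hMsV s e' heM').1)
      · have h1 : e'.1 ∈ Vc (cl s + 1) := hcon ▸ (hEsmem s e heE).2.2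
        exact hz3 (cl s) (hVdis (hEsmem s e' heE').2.1 h1)
  set Cset := tasks.image h with hCsetdef
  have hCH : ∀ c ∈ Cset, c ∈ Hs := by
    intro c hc
    obtain ⟨pp, hpp, rfl⟩ := Finset.mem_image.1 hc
    exact (hK1 pp hpp).1
  have hCswap : ∀ c ∈ Cset, ((c.2, c.1) : V × V) ∉ Cset := by
    intro c hc hcon
    obtain ⟨pp, hpp, rfl⟩ := Finset.mem_image.1 hc
    obtain ⟨pp', hpp', heq⟩ := Finset.mem_image.1 hcon
    by_cases hp : pp' = pp
    · subst hp
      exact hloop (h pp') (hK1 pp' hpp').1 (congrArg Prod.fst heq)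
    · exact ((hK2 pp' hpp' pp hpp hp).1).2 heq
  set Hdir := Hs.filter (fun e => e ∈ Cset ∨ (((e.2, e.1) : V × V) ∉ Cset
    ∧ WellOrderingRel e.1 e.2)) with hHdirdef
  have hwo : IsWellOrder V WellOrderingRel := WellOrderingRel.isWellOrder
  have hasymm : ∀ a b : V, WellOrderingRel a b → WellOrderingRel b a → False :=
    fun a b h1 h2 => irrefl a (_root_.trans h1 h2)
  refine ⟨Hdir, Finset.filter_subset _ _, ?_, PS, cl, ?_, ?_, ?_, ?_, ?_, ?_, ?_, ?_⟩
  · -- orientation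
    intro e he
    have hne := hloop e he
    have hsw : ((e.2, e.1) : V × V) ∈ Hs := hsymm e he
    rw [Prod.mk.eta]
    constructor
    · intro h1 h2
      obtain ⟨_, hc1⟩ := Finset.mem_filter.1 h1
      obtain ⟨_, hc2⟩ := Finset.mem_filter.1 h2
      rcases hc1 with hc1 | ⟨hns, hr⟩
      · rcases hc2 with hc2 | ⟨hns2, _⟩
        · exact hCswap e hc1 hc2
        · exact hns2 (by simpa using hc1)
      · rcases hc2 with hc2 | ⟨hns2, hr2⟩
        · exact hns hc2
        · exact hasymm _ _ hr hr2
    · intro h2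
      by_cases hc : e ∈ Cset
      · exact Finset.mem_filter.mpr ⟨he, Or.inl hc⟩
      · by_cases hcs : ((e.2, e.1) : V × V) ∈ Cset
        · exact absurd (Finset.mem_filter.mpr ⟨hsw, Or.inl hcs⟩) h2
        · rcases trichotomous_of WellOrderingRel e.1 e.2 with hr | hr | hr
          · exact Finset.mem_filter.mpr ⟨he, Or.inr ⟨hcs, hr⟩⟩
          · exact absurd hr hne
          · exact absurd (Finset.mem_filter.mpr ⟨hsw, Or.inr ⟨by simpa using hc, hr⟩⟩) h2
  · -- extension of matchings by Hdir edges
    intro s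
    refine ⟨Finset.subset_union_left, ?_⟩
    intro c hc
    obtain ⟨hc1, hc2⟩ := Finset.mem_sdiff.1 hc
    have hcE : c ∈ Es s := (Finset.mem_union.1 hc1).resolve_left hc2
    obtain ⟨e, he, rfl⟩ := Finset.mem_image.1 hcE
    exact Finset.mem_filter.mpr ⟨(hK1 _ (htaskmem s e he)).1,
      Or.inl (Finset.mem_image.mpr ⟨(s, e), htaskmem s e he, rfl⟩)⟩
  · -- IsPathSeq
    intro s
    constructor
    · intro v
      constructor
      · apply Finset.card_le_one.mpr
        intro a ha b hb
        obtain ⟨haP, ha1⟩ := Finset.mem_filter.1 ha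
        obtain ⟨hbP, hb1⟩ := Finset.mem_filter.1 hb
        by_contra hne
        have h11 : a.1 = b.1 := ha1.trans hb1.symm
        rcases Finset.mem_union.1 haP with hA | hA <;> rcases Finset.mem_union.1 hbP with hB | hB
        · exact (hMpair s a hA b hB hne).1 h11
        · have hbm : a.1 ∈ Vc (cl s - 1) := by rw [h11]; exact (hEsmem s b hB).2.1
          exact hz1 (cl s) (hVdis hbm (hMsV s a hA).1)
        · have hbm : a.1 ∈ Vc (cl s) := by rw [h11]; exact (hMsV s b hB).1
          exact hz1 (cl s) (hVdis (hEsmem s a hA).2.1 hbm)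
        · exact (hEdisjV s a hA b hB hne).1 h11
      · apply Finset.card_le_one.mpr
        intro a ha b hb
        obtain ⟨haP, ha1⟩ := Finset.mem_filter.1 ha
        obtain ⟨hbP, hb1⟩ := Finset.mem_filter.1 hb
        by_contra hne
        have h11 : a.2 = b.2 := ha1.trans hb1.symm
        rcases Finset.mem_union.1 haP with hA | hA <;> rcases Finset.mem_union.1 hbP with hB | hB
        · exact (hMpair s a hA b hB hne).2.2.2 h11
        · have hbm : a.2 ∈ Vc (cl s + 1) := by rw [h11]; exact (hEsmem s b hB).2.2
          exact hz2 (cl s) (hVdis hbm (hMsV s a hA).2)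
        · have hbm : a.2 ∈ Vc (cl s) := by rw [h11]; exact (hMsV s b hB).2
          exact hz2 (cl s) (hVdis (hEsmem s a hA).2.2 hbm)
        · exact (hEdisjV s a hA b hB hne).2 h11
    · rintro n f ⟨hf, hlast⟩
      rcases n with _ | n
      · have h0 : Fin.last 0 = (0 : Fin 1) := by decide
        rw [h0] at hlast
        exact hcons s _ hlast _ hlast rfl
      · have h1 := hf ⟨0, Nat.succ_pos n⟩
        have hc0 : ((⟨0, Nat.succ_pos n⟩ : Fin (n + 1)).castSucc) = (0 : Fin (n + 2)) := by
          apply Fin.ext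
          simp
        rw [hc0] at h1
        exact hcons s _ hlast _ h1 rfl
  · -- local balance
    have hcount : ∀ (X : Finset (V × V)) (pr : V × V → V) (j j' : ZMod k),
        (∀ e ∈ X, pr e ∈ Vc j) →
        (X.filter (fun e => pr e ∈ Vc j')).card = if j' = j then X.card else 0 := by
      intro X pr j j' hX
      split_ifs with hj
      · subst hj
        rw [Finset.filter_true_of_mem hX]
      · rw [Finset.filter_false_of_mem (fun e he hmem => hj (hVdis hmem (hX e he))),
          Finset.card_empty]
    intro s i
    have e1 : (i + 1 = cl s) ↔ (i = cl s - 1) := by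
      constructor <;> intro hh <;> linear_combination hh
    have e2 : (i + 1 = cl s + 1) ↔ (i = cl s) := by
      constructor <;> intro hh <;> linear_combination hh
    rw [show PS s = (M s).toFinset ∪ Es s from rfl, Finset.filter_union, Finset.filter_union,
      Finset.card_union_of_disjoint (Finset.disjoint_filter_filter (hMEdisj s)),
      Finset.card_union_of_disjoint (Finset.disjoint_filter_filter (hMEdisj s)),
      hcount _ _ (cl s) i (fun e he => (hMsV s e he).1),
      hcount _ _ (cl s - 1) i (fun e he => (hEsmem s e he).2.1),
      hcount _ _ (cl s) (i + 1) (fun e he => (hMsV s e he).2),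
      hcount _ _ (cl s + 1) (i + 1) (fun e he => (hEsmem s e he).2.2),
      hEcard s]
    simp only [e1, e2]
    exact add_comm _ _
  · -- pairwise edge-disjointness
    intro s t hst
    rw [Finset.disjoint_left]
    intro c hc hc'
    have hcE : c ∈ Es s := (Finset.mem_union.1 (Finset.mem_sdiff.1 hc).1).resolve_left
      (Finset.mem_sdiff.1 hc).2
    have hcE' : c ∈ Es t := (Finset.mem_union.1 (Finset.mem_sdiff.1 hc').1).resolve_left
      (Finset.mem_sdiff.1 hc').2
    obtain ⟨e, he, hce⟩ := Finset.mem_image.1 hcE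
    obtain ⟨e', he', hce'⟩ := Finset.mem_image.1 hcE'
    have hpne : ((s, e) : Fin q × (V × V)) ≠ (t, e') := by
      intro hcon
      exact hst (congrArg Prod.fst hcon)
    exact ((hK2 (s, e) (htaskmem s e he) (t, e') (htaskmem t e' he') hpne).1).1
      (hce.trans hce'.symm)
  · -- IsExt
    intro s
    have hreach : ∀ e ∈ PS s, ∀ w,
        Relation.ReflTransGen (fun a b => ((a, b) : V × V) ∈ PS s) e.2 w → w = e.2 := by
      intro e he w hr
      rcases Relation.ReflTransGen.cases_head hr with heq | ⟨c, hstep, _⟩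
      · exact heq.symm
      · exact absurd rfl (hcons s e he (e.2, c) hstep)
    refine ⟨Finset.subset_union_left, ?_, ?_⟩
    · intro e he w hw _
      rw [hreach e (Finset.mem_union_left _ he) w hw]
      exact (hMsV s e he).2
    · intro e he e' he' hne
      constructor
      · intro hr
        exact (hMpair s e he e' he' hne).2.2.1
          (hreach e (Finset.mem_union_left _ he) e'.1 hr).symm
      · intro hr
        exact (hMpair s e he e' he' hne).2.2.2
          (hreach e (Finset.mem_union_left _ he) e'.2 hr).symm
  · -- index count
    intro i
    have h2 : (0:ℝ) ≤ (m : ℝ) / k := div_nonneg (Nat.cast_nonneg m) (Nat.cast_nonneg k)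
    calc (((Finset.univ : Finset (Fin q)).filter fun s => cl s = i).card : ℝ)
        ≤ (m : ℝ) / k := hclcount i
      _ ≤ 3 * m / k := by rw [mul_div_assoc]; linarith
  · -- BE3 first part
    intro s j
    have hMlenR : ((M s).toFinset.card : ℝ) ≤ ε * m := by
      calc ((M s).toFinset.card : ℝ) ≤ ((M s).length : ℝ) := by
            exact_mod_cast (M s).toFinset_card_le
        _ ≤ ε * m := hlen s
    have hsub : suppD (PS s) ∩ Vc j ⊆
        ((((M s).toFinset.image Prod.fst ∩ Vc j) ∪ ((M s).toFinset.image Prod.snd ∩ Vc j)) ∪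
         (((Es s).image Prod.fst ∩ Vc j) ∪ ((Es s).image Prod.snd ∩ Vc j))) := by
      intro v hv
      obtain ⟨hv1, hv2⟩ := Finset.mem_inter.1 hv
      simp only [suppD, Finset.mem_union, Finset.mem_image] at hv1
      simp only [Finset.mem_union, Finset.mem_inter, Finset.mem_image]
      rcases hv1 with ⟨e, he, rfl⟩ | ⟨e, he, rfl⟩ <;>
        rcases Finset.mem_union.1 he with hM | hE
      · exact Or.inl (Or.inl ⟨⟨e, hM, rfl⟩, hv2⟩)
      · exact Or.inr (Or.inl ⟨⟨e, hE, rfl⟩, hv2⟩)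
      · exact Or.inl (Or.inr ⟨⟨e, hM, rfl⟩, hv2⟩)
      · exact Or.inr (Or.inr ⟨⟨e, hE, rfl⟩, hv2⟩)
    have hcard4 : (suppD (PS s) ∩ Vc j).card ≤
        ((M s).toFinset.image Prod.fst ∩ Vc j).card +
        ((M s).toFinset.image Prod.snd ∩ Vc j).card +
        (((Es s).image Prod.fst ∩ Vc j).card + ((Es s).image Prod.snd ∩ Vc j).card) := by
      calc (suppD (PS s) ∩ Vc j).card ≤ _ := Finset.card_le_card hsub
        _ ≤ _ := Finset.card_union_le _ _
        _ ≤ _ := Nat.add_le_add (Finset.card_union_le _ _) (Finset.card_union_le _ _)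
    rcases eq_or_ne j (cl s) with hj | hj
    · have hE1 : (Es s).image Prod.fst ∩ Vc j = ∅ := by
        rw [Finset.eq_empty_iff_forall_notMem]
        intro v hv
        obtain ⟨hv1, hv2⟩ := Finset.mem_inter.1 hv
        obtain ⟨c, hc, rfl⟩ := Finset.mem_image.1 hv1
        exact hz1 (cl s) ((hVdis (hEsmem s c hc).2.1 hv2).trans hj)
      have hE2 : (Es s).image Prod.snd ∩ Vc j = ∅ := by
        rw [Finset.eq_empty_iff_forall_notMem]
        intro v hv
        obtain ⟨hv1, hv2⟩ := Finset.mem_inter.1 hv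
        obtain ⟨c, hc, rfl⟩ := Finset.mem_image.1 hv1
        exact hz2 (cl s) ((hVdis (hEsmem s c hc).2.2 hv2).trans hj)
      have hb1 : (((M s).toFinset.image Prod.fst ∩ Vc j).card : ℝ) ≤ ε * m := by
        calc (((M s).toFinset.image Prod.fst ∩ Vc j).card : ℝ)
            ≤ ((M s).toFinset.card : ℝ) := by
              exact_mod_cast (Finset.card_le_card Finset.inter_subset_left).trans
                Finset.card_image_le
          _ ≤ ε * m := hMlenR
      have hb2 : (((M s).toFinset.image Prod.snd ∩ Vc j).card : ℝ) ≤ ε * m := by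
        calc (((M s).toFinset.image Prod.snd ∩ Vc j).card : ℝ)
            ≤ ((M s).toFinset.card : ℝ) := by
              exact_mod_cast (Finset.card_le_card Finset.inter_subset_left).trans
                Finset.card_image_le
          _ ≤ ε * m := hMlenR
      rw [hE1, hE2] at hcard4
      simp only [Finset.card_empty, add_zero] at hcard4
      have hc4 : ((suppD (PS s) ∩ Vc j).card : ℝ) ≤
          (((M s).toFinset.image Prod.fst ∩ Vc j).card : ℝ) +
          (((M s).toFinset.image Prod.snd ∩ Vc j).card : ℝ) := by
        exact_mod_cast hcard4
      linarith
    · have hM1 : (M s).toFinset.image Prod.fst ∩ Vc j = ∅ := by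
        rw [Finset.eq_empty_iff_forall_notMem]
        intro v hv
        obtain ⟨hv1, hv2⟩ := Finset.mem_inter.1 hv
        obtain ⟨c, hc, rfl⟩ := Finset.mem_image.1 hv1
        exact hj (hVdis hv2 (hMsV s c hc).1)
      have hM2 : (M s).toFinset.image Prod.snd ∩ Vc j = ∅ := by
        rw [Finset.eq_empty_iff_forall_notMem]
        intro v hv
        obtain ⟨hv1, hv2⟩ := Finset.mem_inter.1 hv
        obtain ⟨c, hc, rfl⟩ := Finset.mem_image.1 hv1
        exact hj (hVdis hv2 (hMsV s c hc).2)
      have hb3 : (((Es s).image Prod.fst ∩ Vc j).card : ℝ) ≤ ε * m := by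
        calc (((Es s).image Prod.fst ∩ Vc j).card : ℝ)
            ≤ ((M s).toFinset.card : ℝ) := by
              rw [← hEcard s]
              exact_mod_cast (Finset.card_le_card Finset.inter_subset_left).trans
                Finset.card_image_le
          _ ≤ ε * m := hMlenR
      have hb4 : (((Es s).image Prod.snd ∩ Vc j).card : ℝ) ≤ ε * m := by
        calc (((Es s).image Prod.snd ∩ Vc j).card : ℝ)
            ≤ ((M s).toFinset.card : ℝ) := by
              rw [← hEcard s]
              exact_mod_cast (Finset.card_le_card Finset.inter_subset_left).trans
                Finset.card_image_le
          _ ≤ ε * m := hMlenR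
      rw [hM1, hM2] at hcard4
      simp only [Finset.card_empty, add_zero, zero_add] at hcard4
      have hc4 : ((suppD (PS s) ∩ Vc j).card : ℝ) ≤
          (((Es s).image Prod.fst ∩ Vc j).card : ℝ) +
          (((Es s).image Prod.snd ∩ Vc j).card : ℝ) := by
        exact_mod_cast hcard4
      linarith
  · -- BE3 second part
    intro j
    have hsupploc : ∀ (s : Fin q) (v : V), v ∈ suppD (PS s) →
        v ∈ Vc (cl s - 1) ∨ v ∈ Vc (cl s) ∨ v ∈ Vc (cl s + 1) := by
      intro s v hv
      simp only [suppD, Finset.mem_union, Finset.mem_image] at hv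
      rcases hv with ⟨e, he, rfl⟩ | ⟨e, he, rfl⟩ <;>
        rcases Finset.mem_union.1 he with hM | hE
      · exact Or.inr (Or.inl (hMsV s e hM).1)
      · exact Or.inl (hEsmem s e hE).2.1
      · exact Or.inr (Or.inl (hMsV s e hM).2)
      · exact Or.inr (Or.inr (hEsmem s e hE).2.2)
    have hfil : ((Finset.univ : Finset (Fin q)).filter
        (fun s => (suppD (PS s) ∩ Vc j).Nonempty)) ⊆
        (((Finset.univ : Finset (Fin q)).filter (fun s => cl s = j + 1)) ∪
         ((Finset.univ : Finset (Fin q)).filter (fun s => cl s = j))) ∪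
        ((Finset.univ : Finset (Fin q)).filter (fun s => cl s = j - 1)) := by
      intro s hs
      obtain ⟨v, hv⟩ := (Finset.mem_filter.1 hs).2
      obtain ⟨hv1, hv2⟩ := Finset.mem_inter.1 hv
      rcases hsupploc s v hv1 with hcc | hcc | hcc
      · have hji : cl s - 1 = j := hVdis hcc hv2
        exact Finset.mem_union_left _ (Finset.mem_union_left _
          (Finset.mem_filter.mpr ⟨Finset.mem_univ _, by linear_combination hji⟩))
      · have hji : cl s = j := hVdis hcc hv2
        exact Finset.mem_union_left _ (Finset.mem_union_right _
          (Finset.mem_filter.mpr ⟨Finset.mem_univ _, hji⟩))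
      · have hji : cl s + 1 = j := hVdis hcc hv2
        exact Finset.mem_union_right _
          (Finset.mem_filter.mpr ⟨Finset.mem_univ _, by linear_combination hji⟩)
    have hcards : (((Finset.univ : Finset (Fin q)).filter
        (fun s => (suppD (PS s) ∩ Vc j).Nonempty)).card : ℝ) ≤
        (((Finset.univ : Finset (Fin q)).filter (fun s => cl s = j + 1)).card : ℝ) +
        (((Finset.univ : Finset (Fin q)).filter (fun s => cl s = j)).card : ℝ) +
        (((Finset.univ : Finset (Fin q)).filter (fun s => cl s = j - 1)).card : ℝ) := by
      have n1 := Finset.card_le_card hfil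
      have n2 := Finset.card_union_le
        ((((Finset.univ : Finset (Fin q)).filter (fun s => cl s = j + 1)) ∪
         ((Finset.univ : Finset (Fin q)).filter (fun s => cl s = j))))
        ((Finset.univ : Finset (Fin q)).filter (fun s => cl s = j - 1))
      have n3 := Finset.card_union_le
        ((Finset.univ : Finset (Fin q)).filter (fun s => cl s = j + 1))
        ((Finset.univ : Finset (Fin q)).filter (fun s => cl s = j))
      have := le_trans n1 (le_trans n2 (Nat.add_le_add_right n3 _))
      exact_mod_cast this
    calc (((Finset.univ : Finset (Fin q)).filter
        (fun s => (suppD (PS s) ∩ Vc j).Nonempty)).card : ℝ)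
        ≤ _ := hcards
      _ ≤ (m : ℝ) / k + (m : ℝ) / k + (m : ℝ) / k :=
          add_le_add (add_le_add (hclcount _) (hclcount _)) (hclcount _)
      _ = 3 * m / k := by ring
end

section
/- Let P be a (K, m, ε)-partition of vertex set V, let G be a graph on V, and let J ⊆ G be a balanced exceptional system with respect to P, with fictive edge matching J*. If D is a Hamilton cycle of G[A ∪ B] + J* consistent with J*, then D − J* + J is a Hamilton cycle of G. -/
open SimpleGraph

/-- The degree of a vertex, as the cardinality of its neighbourhood. -/
noncomputable def degS {V : Type*} (J : SimpleGraph V) (v : V) : ℕ := (J.neighborSet v).ncard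

/-- A path system: a graph which is a union of vertex-disjoint paths. -/
def PathSystem {V : Type*} (J : SimpleGraph V) : Prop := J.IsAcyclic ∧ ∀ v, degS J v ≤ 2

/-- The matching `J*_{AB}` induced by the nontrivial paths of a path system `J`. -/
def starAB {V : Type*} (J : SimpleGraph V) : SimpleGraph V where
  Adj x y := x ≠ y ∧ degS J x = 1 ∧ degS J y = 1 ∧ J.Reachable x y
  symm := ⟨fun _ _ h => ⟨h.1.symm, h.2.2.1, h.2.1, h.2.2.2.symm⟩⟩
  loopless := ⟨fun _ h => h.1 rfl⟩

lemma starAB_adj {V : Type*} {J : SimpleGraph V} {x y : V} :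
    (starAB J).Adj x y ↔ x ≠ y ∧ degS J x = 1 ∧ degS J y = 1 ∧ J.Reachable x y := Iff.rfl

/-- The cycle graph traced out by `f : ZMod N → V`. -/
def cycOn {V : Type*} {N : ℕ} (f : ZMod N → V) : SimpleGraph V :=
  SimpleGraph.fromEdgeSet {e | ∃ i : ZMod N, e = s(f i, f (i + 1))}

/-- The cycle given by `f` visits the vertices `w 0, w 1, …, w (r-1)` in this (cyclic) order. -/
def VisitsInOrder {V : Type*} {N : ℕ} (f : ZMod N → V) (r : ℕ) (w : ℕ → V) : Prop :=
  ∃ (i₀ : ZMod N) (o : ℕ → ℕ), StrictMonoOn o (Set.Iio r) ∧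
    ∀ j < r, o j < N ∧ f (i₀ + (o j : ZMod N)) = w j

/-- `H` is a Hamilton cycle on the vertex set `A`. -/
def IsHamCycleOn {V : Type*} (H : SimpleGraph V) (A : Set V) : Prop :=
  ∃ (N : ℕ) (f : ZMod N → V), 3 ≤ N ∧ Function.Injective f ∧ Set.range f = A ∧ H = cycOn f


set_option linter.unusedSectionVars false
set_option maxHeartbeats 2000000

section helpers
variable {V : Type*}

lemma nbr_fin [Finite V] (H : SimpleGraph V) (v : V) : (H.neighborSet v).Finite := Set.toFinite _

lemma degS_pos [Finite V] {H : SimpleGraph V} {v u : V} (h : H.Adj v u) : 0 < degS H v :=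
  (Set.ncard_pos (nbr_fin H v)).2 ⟨u, h⟩

def walkOfChain (H : SimpleGraph V) : ∀ (a : V) (L : List V), List.Chain H.Adj a L →
    H.Walk a ((a :: L).getLast (by simp))
  | a, [], _ => SimpleGraph.Walk.nil.copy rfl (by simp)
  | a, b :: L, h =>
    (SimpleGraph.Walk.cons (List.chain_cons.1 h).1 (walkOfChain H b L (List.chain_cons.1 h).2)).copy
      rfl (List.getLast_cons_cons).symm

lemma walkOfChain_support (H : SimpleGraph V) (a : V) (L : List V)
    (h : List.Chain H.Adj a L) : (walkOfChain H a L h).support = a :: L := by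
  induction L generalizing a with
  | nil => simp [walkOfChain]
  | cons b L ih => simp [walkOfChain, ih b]; exact ih b _

lemma walkOfChain_length (H : SimpleGraph V) (a : V) (L : List V)
    (h : List.Chain H.Adj a L) : (walkOfChain H a L h).length = L.length := by
  induction L generalizing a with
  | nil => simp [walkOfChain]
  | cons b L ih => simp [walkOfChain, ih b]; exact ih b _

lemma reachable_of_chain {H : SimpleGraph V} {a : V} {L : List V}
    (h : List.Chain H.Adj a L) : H.Reachable a ((a :: L).getLast (by simp)) :=
  ⟨walkOfChain H a L h⟩

end helpers

section cyc
variable {V : Type*} {N : ℕ} {f : ZMod N → V}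

lemma cycOn_adj {u v : V} :
    (cycOn f).Adj u v ↔ (∃ i, s(u, v) = s(f i, f (i + 1))) ∧ u ≠ v := by
  rw [cycOn, SimpleGraph.fromEdgeSet_adj]; rfl

lemma cycOn_shift (c : ZMod N) : cycOn (fun j => f (c + j)) = cycOn f := by
  unfold cycOn
  congr 1
  ext e
  constructor
  · rintro ⟨i, rfl⟩
    exact ⟨c + i, by rw [add_assoc]⟩
  · rintro ⟨i, rfl⟩
    refine ⟨i - c, ?_⟩
    simp only []
    rw [show c + (i - c) = i by ring, show c + (i - c + 1) = i + 1 by ring]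

lemma cycOn_adj_mem {u v : V} (h : (cycOn f).Adj u v) : u ∈ Set.range f := by
  obtain ⟨⟨i, hi⟩, -⟩ := cycOn_adj.1 h
  rcases Sym2.eq_iff.1 hi with ⟨rfl, -⟩ | ⟨rfl, -⟩
  exacts [⟨i, rfl⟩, ⟨i + 1, rfl⟩]

lemma cycOn_adj_succ (hf : Function.Injective f) (hone : (1 : ZMod N) ≠ 0) (k : ZMod N) :
    (cycOn f).Adj (f k) (f (k + 1)) := cycOn_adj.2 ⟨⟨k, rfl⟩, fun h => hone (by simpa using (hf h).symm)⟩
end cyc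

section cyc2
variable {V : Type*} {N : ℕ} {f : ZMod N → V}

lemma cycOn_adj_iff (hf : Function.Injective f) (a b : ZMod N) (hab : a ≠ b) :
    (cycOn f).Adj (f a) (f b) ↔ (b = a + 1 ∨ a = b + 1) := by
  constructor
  · intro h
    obtain ⟨⟨i, hi⟩, -⟩ := cycOn_adj.1 h
    rcases Sym2.eq_iff.1 hi with ⟨h1, h2⟩ | ⟨h1, h2⟩
    · exact Or.inl (by rw [hf h2, hf h1])
    · exact Or.inr (by rw [hf h1, hf h2])
  · rintro (rfl | rfl)
    · exact cycOn_adj.2 ⟨⟨a, rfl⟩, fun h => hab (hf h)⟩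
    · exact (cycOn_adj.2 ⟨⟨b, rfl⟩, fun h => hab (hf h).symm⟩).symm

lemma cycOn_nbr (hf : Function.Injective f) (hone : (1 : ZMod N) ≠ 0) (z : ZMod N) :
    (cycOn f).neighborSet (f z) = {f (z - 1), f (z + 1)} := by
  ext u
  simp only [SimpleGraph.mem_neighborSet, Set.mem_insert_iff, Set.mem_singleton_iff]
  constructor
  · intro h
    obtain ⟨⟨i, hi⟩, -⟩ := cycOn_adj.1 h
    rcases Sym2.eq_iff.1 hi with ⟨h1, h2⟩ | ⟨h1, h2⟩
    · right; rw [h2, hf h1]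
    · left; rw [h2]; congr 1; rw [hf h1]; ring
  · rintro (rfl | rfl)
    · refine ((cycOn_adj_iff hf (z - 1) z ?_).2 (Or.inl (by ring))).symm
      intro h; apply hone; linear_combination -h
    · exact (cycOn_adj_iff hf z (z + 1) (fun h => hone (by linear_combination -h))).2
        (Or.inl rfl)
end cyc2

lemma reach_leaf {V : Type*} [Fintype V] (J : SimpleGraph V) (hac : J.IsAcyclic)
    (hdeg : ∀ v, degS J v ≤ 2) (v : V) (hv : 0 < degS J v) :
    ∃ z, z ≠ v ∧ degS J z = 1 ∧ J.Reachable v z := by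
  classical
  have : Nonempty V := ⟨v⟩
  set c := Fintype.card V with hc
  set P : ℕ → Prop := fun n => ∃ L : List V, (L.Chain' J.Adj ∧ L.Nodup ∧ L.getLast? = some v)
    ∧ L.length = n with hP
  have hP1 : P 1 := ⟨[v], ⟨by exact List.isChain_singleton v, by simp, by simp⟩, rfl⟩
  have hbd : ∀ n, P n → n ≤ c := by
    rintro n ⟨L, ⟨_, hnd, _⟩, rfl⟩; exact hnd.length_le_card
  have hcpos : 1 ≤ c := Fintype.card_pos
  set k := Nat.findGreatest P c with hk
  have hPk : P k := Nat.findGreatest_spec hcpos hP1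
  obtain ⟨L, ⟨hch, hnd, hlast⟩, hlen⟩ := hPk
  -- L is nonempty
  have hLne : L ≠ [] := by rintro rfl; simp at hlast
  obtain ⟨z, L', rfl⟩ := List.exists_cons_of_ne_nil hLne
  -- any neighbour of z lies in the list
  have hnbr : ∀ t, J.Adj z t → t ∈ z :: L' := by
    intro t ht
    by_contra htL
    have hQ : P (k + 1) := by
      refine ⟨t :: z :: L', ⟨?_, ?_, ?_⟩, by simp [hlen]⟩
      · exact List.isChain_cons.2 ⟨by intro b hb; simp at hb; subst hb; exact ht.symm, hch⟩
      · exact List.nodup_cons.2 ⟨htL, hnd⟩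
      · rw [← hlast]; rfl
    have := Nat.le_findGreatest (hbd _ hQ) hQ
    omega
  -- L' is nonempty
  have hL'ne : L' ≠ [] := by
    rintro rfl
    have hzv : z = v := by simpa using hlast
    obtain ⟨t, ht⟩ : ∃ t, J.Adj v t := by
      have := (Set.ncard_pos (Set.toFinite _)).1 hv
      exact this
    have hm := hnbr t (hzv ▸ ht)
    simp at hm
    exact J.loopless.irrefl v (by rw [hm, hzv] at ht; exact ht)
  obtain ⟨w, L'', rfl⟩ := List.exists_cons_of_ne_nil hL'ne
  have hzw : J.Adj z w := (List.isChain_cons_cons.1 hch).1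
  -- z has a unique neighbour
  have huniq : ∀ t, J.Adj z t → t = w := by
    intro t ht
    by_contra htw
    have htz : t ≠ z := fun h => J.loopless.irrefl z (h ▸ ht)
    have htmem : t ∈ z :: w :: L'' := hnbr t ht
    obtain ⟨l1, l2, hsplit⟩ := List.append_of_mem htmem
    -- l1 has length ≥ 2
    have hl1 : ∃ u l1', l1 = z :: u :: l1' := by
      match l1, hsplit with
      | [], h => simp at h; exact absurd h.1.symm htz
      | [u], h => simp at h; exact absurd h.2.1.symm htw
      | u :: u' :: l1', h =>
        simp at h
        exact ⟨u', l1', by rw [h.1]⟩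
    obtain ⟨u, l1', rfl⟩ := hl1
    -- the prefix z :: u :: l1' ++ [t] is a chain
    have hpre : (z :: u :: l1' ++ [t]) <+: (z :: w :: L'') := by
      refine ⟨l2, ?_⟩
      simpa using hsplit.symm
    have hchpre : (z :: u :: l1' ++ [t]).Chain' J.Adj := hch.prefix (by simpa using hpre)
    have hndpre : (z :: u :: l1' ++ [t]).Nodup := hnd.sublist (by simpa using hpre.sublist)
    have hchain : List.Chain J.Adj z (u :: l1' ++ [t]) := hchpre
    -- build two distinct paths from z to t
    have hlastt : ((z :: (u :: l1' ++ [t]))).getLast (by simp) = t := by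
      exact List.getLast_append_singleton (z :: u :: l1')
    let W1 : J.Walk z t := (walkOfChain J z (u :: l1' ++ [t]) hchain).copy rfl hlastt
    have hW1path : W1.IsPath := by
      rw [Walk.isPath_def]
      show ((walkOfChain J z (u :: l1' ++ [t]) hchain).copy rfl hlastt).support.Nodup
      rw [Walk.support_copy, walkOfChain_support]
      exact hndpre
    let W2 : J.Walk z t := Walk.cons ht Walk.nil
    have hW2path : W2.IsPath := by simp [W2, htz.symm]
    have heq := hac.path_unique ⟨W1, hW1path⟩ ⟨W2, hW2path⟩
    have hlens : W1.length = W2.length := by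
      have := congrArg (fun p : J.Path z t => p.1.length) heq
      simpa using this
    have h1 : W1.length = l1'.length + 2 := by
      show ((walkOfChain J z (u :: l1' ++ [t]) hchain).copy rfl hlastt).length = _
      rw [Walk.length_copy, walkOfChain_length]; simp
    have h2 : W2.length = 1 := rfl
    omega
  -- conclude
  have hdegz : degS J z = 1 := by
    have : J.neighborSet z = {w} := by
      ext t; constructor
      · intro ht; exact huniq t ht
      · rintro rfl; exact hzw
    rw [degS, this, Set.ncard_singleton]
  have hlastv : (z :: w :: L'').getLast (by simp) = v := by
    have := hlast
    rwa [List.getLast?_eq_getLast (l := z :: w :: L'') (by simp), Option.some_inj] at this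
  have hzv : z ≠ v := by
    intro h
    have h2 : (w :: L'').getLast (by simp) = v := by
      rw [← hlastv]; exact (List.getLast_cons (by simp)).symm
    have hmem : v ∈ w :: L'' := h2 ▸ List.getLast_mem (by simp)
    exact (List.nodup_cons.1 hnd).1 (h ▸ hmem)
  have hreach : J.Reachable z v := by
    have := reachable_of_chain (H := J) (a := z) (L := w :: L'') hch
    rwa [hlastv] at this
  exact ⟨z, hzv, hdegz, hreach.symm⟩

lemma ham_of_two_regular_connected {V : Type*} [Fintype V] [Nonempty V] (H : SimpleGraph V)
    (hconn : H.Preconnected) (hdeg : ∀ v, degS H v = 2) :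
    IsHamCycleOn H Set.univ := by
  classical
  have hspec : ∀ v, ∃ a b, a ≠ b ∧ H.neighborSet v = {a, b} :=
    fun v => Set.ncard_eq_two.1 (hdeg v)
  choose n1 n2 hne hset using hspec
  have hmem : ∀ v u, H.Adj v u ↔ u = n1 v ∨ u = n2 v := by
    intro v u
    rw [← SimpleGraph.mem_neighborSet, hset v]; simp
  have hadj1 : ∀ v, H.Adj v (n1 v) := fun v => (hmem v _).2 (Or.inl rfl)
  set other : V → V → V := fun u v => if u = n1 v then n2 v else n1 v with hother
  have hother_adj : ∀ u v, H.Adj v (other u v) := by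
    intro u v
    by_cases h : u = n1 v <;> simp [hother, h, hmem, hadj1]
  have hother_ne : ∀ u v, other u v ≠ u := by
    intro u v
    by_cases h : u = n1 v
    · subst h; simp only [hother, if_pos rfl]; exact fun hc => (hne v) hc.symm
    · simp only [hother, if_neg h]; exact fun hc => h hc.symm
  have hother_uniq : ∀ u v w, H.Adj v u → H.Adj v w → w ≠ u → w = other u v := by
    intro u v w hu hw hwu
    rw [hmem] at hu hw
    rcases hu with rfl | rfl <;> rcases hw with rfl | rfl
    · exact absurd rfl hwu
    · simp [hother]
    · have h' : n2 v ≠ n1 v := fun hc => hne v hc.symm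
      simp [hother, h']
    · exact absurd rfl hwu
  have hother_other : ∀ u v, H.Adj u v → other (other u v) v = u := by
    intro u v h
    refine (hother_uniq (other u v) v u (hother_adj u v) h.symm ?_).symm
    exact fun hc => hother_ne u v hc.symm
  -- the step function on oriented edges
  set step : V × V → V × V := fun p => (p.2, other p.1 p.2) with hstepdef
  have hstep_inj : ∀ p q : V × V, H.Adj p.1 p.2 → H.Adj q.1 q.2 → step p = step q → p = q := by
    rintro ⟨a, b⟩ ⟨c, d⟩ hab hcd hpq
    simp only [hstepdef, Prod.mk.injEq] at hpq
    obtain ⟨rfl, h2⟩ := hpq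
    have hac : a = c := by
      have ha := (hmem b a).1 hab.symm
      have hc := (hmem b c).1 hcd.symm
      have e1 : other (n1 b) b = n2 b := by simp [hother]
      have e2 : other (n2 b) b = n1 b := by
        have h' : n2 b ≠ n1 b := fun hc => hne b hc.symm
        simp [hother, h']
      rcases ha with rfl | rfl <;> rcases hc with rfl | rfl
      · rfl
      · rw [e1, e2] at h2; exact absurd h2.symm (hne b)
      · rw [e1, e2] at h2; exact absurd h2 (hne b)
      · rfl
    exact Prod.ext hac rfl
  have hstep_rev : ∀ u v : V, H.Adj u v → step (Prod.swap (step (u, v))) = Prod.swap (u, v) := by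
    intro u v h
    simp only [hstepdef, Prod.swap]
    exact Prod.ext rfl (hother_other u v h)
  -- the orbit
  obtain ⟨v0⟩ := (inferInstance : Nonempty V)
  set e : ℕ → V × V := fun k => step^[k] (v0, n1 v0) with he
  have hesucc : ∀ k, e (k + 1) = step (e k) := by
    intro k; simp [he, Function.iterate_succ_apply']
  have hAdje : ∀ k, H.Adj (e k).1 (e k).2 := by
    intro k; induction k with
    | zero => exact hadj1 v0
    | succ k ih =>
      rw [hesucc k]
      exact (hother_adj _ _)
  have hbackshift : ∀ i j, i ≤ j → e i = e j → e 0 = e (j - i) := by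
    intro i j hij heq
    induction i generalizing j with
    | zero => rw [heq]; simp
    | succ i ih =>
      obtain ⟨j', rfl⟩ : ∃ j', j = j' + 1 := ⟨j - 1, by omega⟩
      have : e i = e j' := by
        apply hstep_inj _ _ (hAdje i) (hAdje j')
        rw [← hesucc, ← hesucc]; exact heq
      have := ih j' (by omega) this
      simpa using this
  obtain ⟨i, j, hij, heqij⟩ : ∃ i j, i ≠ j ∧ e i = e j := by
    obtain ⟨i, j, hne', heq'⟩ := Finite.exists_ne_map_eq_of_infinite e
    exact ⟨i, j, hne', heq'⟩
  have hPex : ∃ n, 0 < n ∧ e n = e 0 := by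
    rcases Nat.lt_or_ge i j with h | h
    · exact ⟨j - i, by omega, (hbackshift i j (by omega) heqij).symm⟩
    · exact ⟨i - j, by omega, (hbackshift j i (by omega) heqij.symm).symm⟩
  set N' := Nat.find hPex with hN'
  obtain ⟨hN'pos, hper0⟩ : 0 < N' ∧ e N' = e 0 := Nat.find_spec hPex
  have hmin : ∀ m, m < N' → ¬(0 < m ∧ e m = e 0) := fun m hm => Nat.find_min hPex hm
  have hN3 : 3 ≤ N' := by
    by_contra hcon
    push_neg at hcon
    have h1 : N' ≠ 1 := by
      intro h1
      have h0 : e 1 = e 0 := by rw [← h1]; exact hper0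
      rw [hesucc 0] at h0
      have h2 := congrArg Prod.fst h0
      simp only [hstepdef] at h2
      exact H.irrefl (h2 ▸ hAdje 0)
    have h2' : N' ≠ 2 := by
      intro h1
      have h0 : e 2 = e 0 := by rw [← h1]; exact hper0
      rw [hesucc 1, hesucc 0] at h0
      have h2 := congrArg Prod.fst h0
      simp only [hstepdef] at h2
      exact hother_ne (e 0).1 (e 0).2 h2
    omega
  have hper : ∀ k, e (k + N') = e k := by
    intro k; induction k with
    | zero => simpa using hper0
    | succ k ih => rw [show k + 1 + N' = (k + N') + 1 by omega, hesucc, hesucc, ih]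
  have hmod : ∀ k, e (k % N') = e k := by
    intro k
    induction k using Nat.strong_induction_on with
    | _ k ih =>
      rcases Nat.lt_or_ge k N' with h | h
      · rw [Nat.mod_eq_of_lt h]
      · have h1 : k % N' = (k - N') % N' := by
          conv_lhs => rw [show k = (k - N') + N' by omega]
          simp [Nat.add_mod_right]
        rw [h1, ih (k - N') (by omega)]
        conv_rhs => rw [show k = (k - N') + N' by omega]
        rw [hper]
  haveI : NeZero N' := ⟨by omega⟩
  haveI : Fact (1 < N') := ⟨by omega⟩
  set E : ZMod N' → V × V := fun z => e z.val with hE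
  have hEsucc : ∀ z : ZMod N', E (z + 1) = step (E z) := by
    intro z
    have hval : (z + 1).val = (z.val + 1) % N' := by
      rw [ZMod.val_add, ZMod.val_one]
    simp only [hE, hval, hmod, hesucc]
  have hAdjE : ∀ z, H.Adj (E z).1 (E z).2 := fun z => hAdje _
  have hEinj : Function.Injective E := by
    intro z1 z2 heq
    simp only [hE] at heq
    by_contra hne'
    have hvne : z1.val ≠ z2.val := fun h => hne' (ZMod.val_injective _ h)
    rcases Nat.lt_or_ge z1.val z2.val with h | h
    · have := (hbackshift _ _ (le_of_lt h) heq).symm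
      exact hmin _ (by have := z2.val_lt; omega) ⟨by omega, this⟩
    · have := (hbackshift _ _ h heq.symm).symm
      exact hmin _ (by have := z1.val_lt; omega) ⟨by omega, this⟩
  have hEpred : ∀ z : ZMod N', (E z).1 = (E (z - 1)).2 := by
    intro z
    have := hEsucc (z - 1)
    rw [sub_add_cancel] at this
    rw [this]
  set f : ZMod N' → V := fun z => (E z).1 with hf
  have hsnd : ∀ z : ZMod N', f (z + 1) = (E z).2 := by
    intro z; show (E (z+1)).1 = (E z).2; rw [hEsucc]
  -- injectivity of f
  have hfinj : Function.Injective f := by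
    intro z1 z2 heq
    by_contra hzne
    have ha2 : (E z2).1 = (E z1).1 := heq.symm
    set a := (E z1).1 with ha
    set p1 := (E (z1 - 1)).1 with hp1d
    set p2 := (E (z2 - 1)).1 with hp2d
    have hpa1 : (E (z1 - 1)).2 = a := (hEpred z1).symm
    have hpa2 : (E (z2 - 1)).2 = a := by rw [← ha2]; exact (hEpred z2).symm
    have hadjp1 : H.Adj p1 a := by have h := hAdjE (z1 - 1); rwa [hpa1] at h
    have hadjp2 : H.Adj p2 a := by have h := hAdjE (z2 - 1); rwa [hpa2] at h
    have hpne : p1 ≠ p2 := by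
      intro hp
      apply hzne
      have hEeq : E (z1 - 1) = E (z2 - 1) := Prod.ext_iff.2 ⟨hp, by rw [hpa1, hpa2]⟩
      have h3 := congrArg (· + 1) (hEinj hEeq)
      simpa [sub_add_cancel] using h3
    have hsz1 : E z1 = (a, other p1 a) := by
      have h := hEsucc (z1 - 1)
      rw [sub_add_cancel] at h
      rw [h]
      show ((E (z1-1)).2, other p1 (E (z1-1)).2) = (a, other p1 a)
      rw [hpa1]
    have hp2other : p2 = other p1 a := hother_uniq p1 a p2 hadjp1.symm hadjp2.symm hpne.symm
    have hbase : E z1 = Prod.swap (E (z2 - 1)) := by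
      have h2 : E (z2 - 1) = (p2, a) := Prod.ext_iff.2 ⟨rfl, hpa2⟩
      rw [h2, hsz1, hp2other]
      rfl
    have hrefl : ∀ t : ℕ, E (z1 + t) = Prod.swap (E (z2 - 1 - t)) := by
      intro t
      induction t with
      | zero => simpa using hbase
      | succ t ih =>
        have hcast : ((t + 1 : ℕ) : ZMod N') = (t : ZMod N') + 1 := by push_cast; ring
        rw [hcast, ← add_assoc, hEsucc, ih]
        have h3 : z2 - 1 - ((t : ZMod N') + 1) = z2 - 1 - t - 1 := by ring
        rw [h3]
        have h2 := hstep_rev (E (z2 - 1 - (t:ZMod N') - 1)).1 (E (z2 - 1 - (t:ZMod N') - 1)).2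
          (hAdjE _)
        conv_lhs => rw [show (z2 - 1 - (t:ZMod N')) = (z2 - 1 - (t:ZMod N') - 1) + 1 from
          (sub_add_cancel _ _).symm, hEsucc]
        exact h2
    set d := z2 - 1 - z1 with hd
    set m := d.val with hm
    have hdcast : ((m : ℕ) : ZMod N') = d := by rw [hm, ZMod.natCast_val, ZMod.cast_id]
    rcases Nat.even_or_odd m with ⟨t, ht⟩ | ⟨t, ht⟩
    · have hcol : z2 - 1 - (t : ZMod N') = z1 + t := by
        have h4 : ((t : ZMod N') + t) = z2 - 1 - z1 := by
          rw [← hd, ← hdcast, ht]; push_cast; ring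
        linear_combination -h4
      have h5 := hrefl t
      rw [hcol] at h5
      have h6 := congrArg Prod.fst h5
      simp only [Prod.fst_swap] at h6
      have h7 := hAdjE (z1 + (t : ZMod N'))
      rw [← h6] at h7
      exact H.irrefl h7
    · have hcol : z2 - 1 - (t : ZMod N') = z1 + t + 1 := by
        have h4 : ((t : ZMod N') + t + 1) = z2 - 1 - z1 := by
          rw [← hd, ← hdcast, ht]; push_cast; ring
        linear_combination -h4
      have h5 := hrefl t
      rw [hcol, hEsucc] at h5
      simp only [hstepdef, Prod.swap_prod_mk] at h5
      have h6 := congrArg Prod.fst h5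
      simp only [] at h6
      exact hother_ne _ _ h6.symm
  -- neighbours of f z are f (z+1) and f (z-1)
  have hnbrs : ∀ z : ZMod N', ∀ w, H.Adj (f z) w → w = f (z + 1) ∨ w = f (z - 1) := by
    intro z w hw
    have hadjs : H.Adj (f z) (f (z + 1)) := by rw [hsnd]; exact hAdjE z
    have h2 : (E (z-1)).2 = f z := (hEpred z).symm
    have hadjp : H.Adj (f z) (f (z - 1)) := by
      have h := hAdjE (z - 1)
      rw [h2] at h
      exact h.symm
    have hfp : f (z - 1) = (E (z - 1)).1 := rfl
    have hother1 : f (z + 1) = other (f (z - 1)) (f z) := by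
      rw [hsnd]
      have h := hEsucc (z - 1)
      rw [sub_add_cancel] at h
      calc (E z).2 = (step (E (z - 1))).2 := by rw [← h]
      _ = other (E (z-1)).1 (E (z-1)).2 := rfl
      _ = other (f (z-1)) (f z) := by rw [hfp, h2]
    by_cases hws : w = f (z + 1)
    · exact Or.inl hws
    · right
      have h1 : w = other (f (z + 1)) (f z) := hother_uniq _ _ _ hadjs hw hws
      have h2' : f (z - 1) = other (f (z + 1)) (f z) := by
        apply hother_uniq _ _ _ hadjs hadjp
        rw [hother1]
        exact fun hc => hother_ne (f (z-1)) (f z) hc.symm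
      rw [h1, h2']
  have hrange : Set.range f = Set.univ := by
    have hstep' : ∀ u w, u ∈ Set.range f → H.Adj u w → w ∈ Set.range f := by
      rintro u w ⟨z, rfl⟩ hadj
      rcases hnbrs z w hadj with rfl | rfl
      · exact ⟨z + 1, rfl⟩
      · exact ⟨z - 1, rfl⟩
    have hwalk : ∀ (u w : V), u ∈ Set.range f → H.Walk u w → w ∈ Set.range f := by
      intro u w hu p
      induction p with
      | nil => exact hu
      | cons h p ih => exact ih (hstep' _ _ hu h)
    have hv0 : v0 ∈ Set.range f := ⟨0, by simp [hf, hE, he]⟩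
    ext w
    simp only [Set.mem_univ, iff_true]
    exact hwalk v0 w hv0 (hconn v0 w).some
  -- H = cycOn f
  have hHeq : H = cycOn f := by
    ext u v
    rw [cycOn, SimpleGraph.fromEdgeSet_adj]
    constructor
    · intro huv
      have hu : u ∈ Set.range f := hrange ▸ Set.mem_univ u
      obtain ⟨z, rfl⟩ := hu
      rcases hnbrs z v huv with rfl | rfl
      · exact ⟨⟨z, rfl⟩, huv.ne⟩
      · refine ⟨⟨z - 1, ?_⟩, huv.ne⟩
        rw [sub_add_cancel]
        exact Sym2.eq_swap
    · rintro ⟨⟨i, hi⟩, hne'⟩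
      have hadji : H.Adj (f i) (f (i + 1)) := by
        rw [hsnd]; exact hAdjE i
      rcases Sym2.eq_iff.1 hi with ⟨rfl, rfl⟩ | ⟨rfl, rfl⟩
      · exact hadji
      · exact hadji.symm
  exact ⟨N', f, hN3, hfinj, hrange, hHeq⟩

/-- Proposition 7.1: if `J ⊆ G` is a balanced exceptional system with respect to a
`(K,m,ε)`-partition and `D` is a Hamilton cycle of `G[A ∪ B] + J*` consistent with `J*`,
then `D - J* + J` is a Hamilton cycle of `G`. -/
theorem stmt14 (V : Type*) [Fintype V] (K m : ℕ) (ε : ℝ) (hK : 1 ≤ K)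
    (AA BB : Fin (K + 1) → Set V) (A B : Set V) (G J : SimpleGraph V)
    -- the (K,m,ε)-partition
    (hAAdisj : ∀ i j, i ≠ j → Disjoint (AA i) (AA j))
    (hBBdisj : ∀ i j, i ≠ j → Disjoint (BB i) (BB j))
    (hABdisj : ∀ i j, Disjoint (AA i) (BB j))
    (hcover : (⋃ i, AA i) ∪ (⋃ i, BB i) = Set.univ)
    (hsize : ∀ i, i ≠ 0 → (AA i).ncard = m ∧ (BB i).ncard = m)
    (hexc : ((AA 0 ∪ BB 0).ncard : ℝ) ≤ ε * Fintype.card V)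
    (hA : A = (⋃ i, AA i) \ AA 0) (hB : B = (⋃ i, BB i) \ BB 0)
    -- J is a balanced exceptional system with respect to the partition
    (hps : PathSystem J)
    (i₁ i₂ i₃ i₄ : Fin (K + 1))
    (hi : i₁ ≠ 0 ∧ i₂ ≠ 0 ∧ i₃ ≠ 0 ∧ i₄ ≠ 0)
    (hloc : ∀ v, 0 < degS J v → v ∈ AA 0 ∪ BB 0 ∪ AA i₁ ∪ AA i₂ ∪ BB i₃ ∪ BB i₄)
    (hBES1a : ∀ v ∈ AA 0 ∪ BB 0, degS J v = 2)
    (hBES1b : ∀ v, v ∉ AA 0 ∪ BB 0 → degS J v ≤ 1)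
    (hBES2 : ∀ u v, J.Adj u v → u ∈ A ∪ B → v ∈ A ∪ B →
      (u ∈ AA i₁ ∧ v ∈ AA i₂) ∨ (u ∈ AA i₂ ∧ v ∈ AA i₁) ∨
      (u ∈ BB i₃ ∧ v ∈ BB i₄) ∨ (u ∈ BB i₄ ∧ v ∈ BB i₃))
    (hBES3 : {v | v ∈ A ∧ 0 < degS J v}.ncard = {v | v ∈ B ∧ 0 < degS J v}.ncard)
    (hBES4 : (J.edgeSet.ncard : ℝ) ≤ ε * Fintype.card V)
    (hJG : J ≤ G)
    -- the fictive edges `J* = {x_i y_i : i < s'}`, obtained by enumerating the edges of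
    -- `J*_{AB}` inside `A` as `x₀x₁, …, x_{2s-2}x_{2s-1}`, those inside `B` as
    -- `y₀y₁, …, y_{2s-2}y_{2s-1}` and the `AB`-edges as `x_iy_i` for `2s ≤ i < s'`
    (s s' : ℕ) (hs : 2 * s ≤ s') (x y : ℕ → V)
    (hxinj : Set.InjOn x (Set.Iio s')) (hyinj : Set.InjOn y (Set.Iio s'))
    (hxA : ∀ i < s', x i ∈ A) (hyB : ∀ i < s', y i ∈ B)
    (hedges : (starAB J).edgeSet =
      {e | ∃ i < s, e = s(x (2 * i), x (2 * i + 1))} ∪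
      {e | ∃ i < s, e = s(y (2 * i), y (2 * i + 1))} ∪
      {e | ∃ i, 2 * s ≤ i ∧ i < s' ∧ e = s(x i, y i)})
    (Jstar : SimpleGraph V)
    (hJstar : Jstar = SimpleGraph.fromEdgeSet {e | ∃ i < s', e = s(x i, y i)})
    -- `D` is a Hamilton cycle of `G[A ∪ B] + J*`, consistent with `J*`
    (N : ℕ) (f : ZMod N → V) (hN : 3 ≤ N)
    (hfinj : Function.Injective f) (hfrange : Set.range f = A ∪ B)
    (hDsub : cycOn f ≤ G ⊔ Jstar)
    (hcons : Jstar ≤ cycOn f ∧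
      VisitsInOrder f (2 * s')
        (fun j => if j % 2 = 0 then x (j / 2) else y (j / 2))) :
    IsHamCycleOn ((cycOn f \ Jstar) ⊔ J) Set.univ := by
  classical
  obtain ⟨hps1, hps2⟩ := hps
  obtain ⟨hJsub, i₀, o, hmono, hvis⟩ := hcons
  haveI : NeZero N := ⟨by omega⟩
  haveI : Fact (1 < N) := ⟨by omega⟩
  have hone : (1 : ZMod N) ≠ 0 := by
    intro h
    have h2 := congrArg ZMod.val h
    rw [ZMod.val_one, ZMod.val_zero] at h2
    omega
  -- basic disjointness facts
  have hABd : ∀ v, v ∈ A → v ∈ B → False := by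
    intro v hvA hvB
    rw [hA] at hvA; rw [hB] at hvB
    obtain ⟨i, hi⟩ := Set.mem_iUnion.1 hvA.1
    obtain ⟨j, hj⟩ := Set.mem_iUnion.1 hvB.1
    exact Set.disjoint_left.1 (hABdisj i j) hi hj
  have hV0AB : ∀ v, v ∈ AA 0 ∪ BB 0 → v ∈ A ∪ B → False := by
    intro v hv0 hvAB
    rcases hv0 with h0 | h0 <;> rcases hvAB with hAB' | hAB'
    · rw [hA] at hAB'; exact hAB'.2 h0
    · rw [hB] at hAB'
      obtain ⟨j, hj⟩ := Set.mem_iUnion.1 hAB'.1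
      exact Set.disjoint_left.1 (hABdisj 0 j) h0 hj
    · rw [hA] at hAB'
      obtain ⟨j, hj⟩ := Set.mem_iUnion.1 hAB'.1
      exact Set.disjoint_left.1 (hABdisj j 0) hj h0
    · rw [hB] at hAB'; exact hAB'.2 h0
  have hcover' : ∀ v : V, v ∈ AA 0 ∪ BB 0 ∨ v ∈ A ∪ B := by
    intro v
    have hv : v ∈ (⋃ i, AA i) ∪ ⋃ i, BB i := hcover ▸ Set.mem_univ v
    rcases hv with hv | hv
    · by_cases h0 : v ∈ AA 0
      · exact Or.inl (Or.inl h0)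
      · exact Or.inr (Or.inl (hA ▸ ⟨hv, h0⟩))
    · by_cases h0 : v ∈ BB 0
      · exact Or.inl (Or.inr h0)
      · exact Or.inr (Or.inr (hB ▸ ⟨hv, h0⟩))
  have hxy : ∀ i j, i < s' → j < s' → x i ≠ y j := fun i j hi hj h =>
    hABd (x i) (hxA i hi) (h ▸ hyB j hj)
  -- leaf classification
  have hJdegAB : ∀ v, v ∈ A ∪ B → degS J v ≤ 1 := fun v hv =>
    hBES1b v (fun h0 => hV0AB v h0 hv)
  have hleafmem : ∀ v, degS J v = 1 → ∃ k, k < s' ∧ (v = x k ∨ v = y k) := by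
    intro v hv
    obtain ⟨z, hzv, hz1, hreach⟩ := reach_leaf J hps1 hps2 v (by omega)
    have hadj : (starAB J).Adj v z := starAB_adj.2 ⟨Ne.symm hzv, hv, hz1, hreach⟩
    have hedge : s(v, z) ∈ (starAB J).edgeSet := hadj
    rw [hedges] at hedge
    rcases hedge with (⟨k, hk, he⟩ | ⟨k, hk, he⟩) | ⟨k, hk1, hk2, he⟩
    · rcases Sym2.eq_iff.1 he with ⟨h1, -⟩ | ⟨h1, -⟩
      · exact ⟨2 * k, by omega, Or.inl h1⟩
      · exact ⟨2 * k + 1, by omega, Or.inl h1⟩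
    · rcases Sym2.eq_iff.1 he with ⟨h1, -⟩ | ⟨h1, -⟩
      · exact ⟨2 * k, by omega, Or.inr h1⟩
      · exact ⟨2 * k + 1, by omega, Or.inr h1⟩
    · rcases Sym2.eq_iff.1 he with ⟨h1, -⟩ | ⟨h1, -⟩
      · exact ⟨k, hk2, Or.inl h1⟩
      · exact ⟨k, hk2, Or.inr h1⟩
  -- degrees at the designated endpoints
  have hstarE : ∀ u v : V, s(u, v) ∈ (starAB J).edgeSet →
      degS J u = 1 ∧ degS J v = 1 ∧ J.Reachable u v := by
    intro u v h
    have h2 := starAB_adj.1 (show (starAB J).Adj u v from h)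
    exact ⟨h2.2.1, h2.2.2.1, h2.2.2.2⟩
  have hedgexx : ∀ k, k < s → s(x (2 * k), x (2 * k + 1)) ∈ (starAB J).edgeSet := by
    intro k hk; rw [hedges]; exact Or.inl (Or.inl ⟨k, hk, rfl⟩)
  have hedgeyy : ∀ k, k < s → s(y (2 * k), y (2 * k + 1)) ∈ (starAB J).edgeSet := by
    intro k hk; rw [hedges]; exact Or.inl (Or.inr ⟨k, hk, rfl⟩)
  have hedgexy : ∀ i, 2 * s ≤ i → i < s' → s(x i, y i) ∈ (starAB J).edgeSet := by
    intro i h1 h2; rw [hedges]; exact Or.inr ⟨i, h1, h2, rfl⟩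
  have hxdeg : ∀ i, i < s' → degS J (x i) = 1 := by
    intro i hi
    rcases Nat.lt_or_ge i (2 * s) with h2 | h2
    · rcases Nat.even_or_odd i with ⟨k, hk⟩ | ⟨k, hk⟩
      · have h3 := hstarE _ _ (hedgexx k (by omega))
        rw [show i = 2 * k by omega]
        exact h3.1
      · have h3 := hstarE _ _ (hedgexx k (by omega))
        rw [show i = 2 * k + 1 by omega]
        exact h3.2.1
    · exact (hstarE _ _ (hedgexy i h2 hi)).1
  have hydeg : ∀ i, i < s' → degS J (y i) = 1 := by
    intro i hi
    rcases Nat.lt_or_ge i (2 * s) with h2 | h2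
    · rcases Nat.even_or_odd i with ⟨k, hk⟩ | ⟨k, hk⟩
      · have h3 := hstarE _ _ (hedgeyy k (by omega))
        rw [show i = 2 * k by omega]
        exact h3.1
      · have h3 := hstarE _ _ (hedgeyy k (by omega))
        rw [show i = 2 * k + 1 by omega]
        exact h3.2.1
    · exact (hstarE _ _ (hedgexy i h2 hi)).2.1
  have hreachxx : ∀ k, k < s → J.Reachable (x (2 * k)) (x (2 * k + 1)) :=
    fun k hk => (hstarE _ _ (hedgexx k hk)).2.2
  have hreachyy : ∀ k, k < s → J.Reachable (y (2 * k)) (y (2 * k + 1)) :=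
    fun k hk => (hstarE _ _ (hedgeyy k hk)).2.2
  have hreachxy : ∀ i, 2 * s ≤ i → i < s' → J.Reachable (x i) (y i) :=
    fun i h1 h2 => (hstarE _ _ (hedgexy i h1 h2)).2.2
  -- characterization of Jstar adjacency
  have hJstarAdj : ∀ u v, Jstar.Adj u v ↔
      ∃ i, i < s' ∧ ((u = x i ∧ v = y i) ∨ (u = y i ∧ v = x i)) := by
    intro u v
    rw [hJstar, SimpleGraph.fromEdgeSet_adj]
    constructor
    · rintro ⟨⟨i, hi, he⟩, hne⟩
      rcases Sym2.eq_iff.1 he with ⟨h1, h2⟩ | ⟨h1, h2⟩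
      · exact ⟨i, hi, Or.inl ⟨h1, h2⟩⟩
      · exact ⟨i, hi, Or.inr ⟨h1, h2⟩⟩
    · rintro ⟨i, hi, (⟨rfl, rfl⟩ | ⟨rfl, rfl⟩)⟩
      · exact ⟨⟨i, hi, rfl⟩, hxy i i hi hi⟩
      · exact ⟨⟨i, hi, Sym2.eq_swap⟩, (hxy i i hi hi).symm⟩
  rcases Nat.eq_zero_or_pos s' with hs0 | hs'pos
  · -- degenerate case s' = 0 : J = ⊥ and Jstar = ⊥
    subst hs0
    have hJbot : J = ⊥ := by
      ext u v
      simp only [SimpleGraph.bot_adj, iff_false]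
      intro huv
      have hd : 0 < degS J u := degS_pos huv
      rcases hcover' u with h0 | h0
      · obtain ⟨z, hz, hz1, -⟩ := reach_leaf J hps1 hps2 u hd
        obtain ⟨k, hk, -⟩ := hleafmem z hz1
        omega
      · have h1 : degS J u = 1 := le_antisymm (hJdegAB u h0) hd
        obtain ⟨k, hk, -⟩ := hleafmem u h1
        omega
    have hJstarBot : Jstar = ⊥ := by
      rw [hJstar]
      have : {e : Sym2 V | ∃ i < 0, e = s(x i, y i)} = ∅ := by
        ext e; simp only [Set.mem_setOf_eq, Set.mem_empty_iff_false, iff_false]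
        rintro ⟨i, hi, -⟩; omega
      rw [this, SimpleGraph.fromEdgeSet_empty]
    have hABuniv : A ∪ B = Set.univ := by
      ext v
      simp only [Set.mem_univ, iff_true]
      rcases hcover' v with h0 | h0
      · exfalso
        have h2 := hBES1a v h0
        rw [hJbot] at h2
        have h3 : degS (⊥ : SimpleGraph V) v = 0 := by
          have he : (⊥ : SimpleGraph V).neighborSet v = ∅ := by ext u; simp
          rw [degS, he, Set.ncard_empty]
        omega
      · exact h0
    refine ⟨N, f, hN, hfinj, by rw [hfrange, hABuniv], ?_⟩
    rw [hJbot, hJstarBot]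
    simp
  · -- main case
    set g : ZMod N → V := fun j => f (i₀ + j) with hgdef
    have hgf : cycOn g = cycOn f := cycOn_shift i₀
    have hginj : Function.Injective g := fun a b h => by
      have h2 := hfinj h
      exact add_left_cancel h2
    have hgrange : Set.range g = A ∪ B := by
      rw [← hfrange]
      ext v
      constructor
      · rintro ⟨k, rfl⟩; exact ⟨i₀ + k, rfl⟩
      · rintro ⟨k, rfl⟩
        refine ⟨k - i₀, ?_⟩
        show f (i₀ + (k - i₀)) = f k
        congr 1
        ring
    have holt : ∀ j, j < 2 * s' → o j < N := fun j hj => (hvis j hj).1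
    have homono : ∀ a b, a < b → b < 2 * s' → o a < o b := fun a b hab hb =>
      hmono (Set.mem_Iio.2 (lt_trans hab hb)) (Set.mem_Iio.2 hb) hab
    have hgx : ∀ i, i < s' → g ((o (2 * i) : ZMod N)) = x i := by
      intro i hi
      have h1 := (hvis (2 * i) (by omega)).2
      have h2 : 2 * i % 2 = 0 := by omega
      have h3 : 2 * i / 2 = i := by omega
      simp only [h2, h3, if_pos] at h1
      exact h1
    have hgy : ∀ i, i < s' → g ((o (2 * i + 1) : ZMod N)) = y i := by
      intro i hi
      have h1 := (hvis (2 * i + 1) (by omega)).2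
      have h2 : (2 * i + 1) % 2 = 1 := by omega
      have h3 : (2 * i + 1) / 2 = i := by omega
      simp only [h2, h3] at h1
      simpa using h1
    have hval : ∀ t : ℕ, t < N → ((t : ZMod N)).val = t := fun t ht => ZMod.val_cast_of_lt ht
    have hcastinj : ∀ a b : ℕ, a < N → b < N → ((a : ZMod N) = (b : ZMod N)) → a = b := by
      intro a b ha hb h
      have h2 := congrArg ZMod.val h
      rwa [hval a ha, hval b hb] at h2
    have hposx : ∀ i, i < s' → ∀ t : ℕ, t < N → g (t : ZMod N) = x i → t = o (2 * i) := by
      intro i hi t ht hgt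
      exact hcastinj t _ ht (holt _ (by omega)) (hginj (hgt.trans (hgx i hi).symm))
    have hposy : ∀ i, i < s' → ∀ t : ℕ, t < N → g (t : ZMod N) = y i → t = o (2 * i + 1) := by
      intro i hi t ht hgt
      exact hcastinj t _ ht (holt _ (by omega)) (hginj (hgt.trans (hgy i hi).symm))
    -- the fictive x-pairs and y-pairs are not edges of the cycle
    have hcastsucc : ∀ t : ℕ, ((t : ZMod N) + 1) = ((t + 1 : ℕ) : ZMod N) := by
      intro t; push_cast; ring
    have hxxD : ∀ k, 2 * k + 1 < 2 * s → ¬ (cycOn f).Adj (x (2 * k)) (x (2 * k + 1)) := by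
      intro k hk hadj
      rw [← hgf] at hadj
      rw [← hgx (2 * k) (by omega), ← hgx (2 * k + 1) (by omega)] at hadj
      have hb1 : 2 * (2 * k) + 1 < 2 * s' := by omega
      have hb2 : 2 * (2 * k + 1) + 1 < 2 * s' := by omega
      have hne2 : ((o (2 * (2 * k)) : ZMod N)) ≠ (o (2 * (2 * k + 1)) : ZMod N) := by
        intro h
        have h2 := hcastinj _ _ (holt _ (by omega)) (holt _ (by omega)) h
        have h3 := homono (2 * (2 * k)) (2 * (2 * k + 1)) (by omega) (by omega)
        omega
      rcases (cycOn_adj_iff hginj _ _ hne2).1 hadj with h | h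
      · rw [hcastsucc] at h
        have h2 := hcastinj _ _ (holt _ (by omega))
          (by have := holt (2 * (2 * k) + 1) (by omega)
              have := homono (2 * (2 * k)) (2 * (2 * k) + 1) (by omega) (by omega)
              omega) h
        have h3 := homono (2 * (2 * k)) (2 * (2 * k) + 1) (by omega) (by omega)
        have h4 := homono (2 * (2 * k) + 1) (2 * (2 * k + 1)) (by omega) (by omega)
        omega
      · rw [hcastsucc] at h
        by_cases hN1 : o (2 * (2 * k + 1)) + 1 < N
        · have h2 := hcastinj _ _ (holt _ (by omega)) hN1 h
          have h3 := homono (2 * (2 * k)) (2 * (2 * k + 1)) (by omega) (by omega)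
          omega
        · have hNeq : o (2 * (2 * k + 1)) + 1 = N := by
            have := holt (2 * (2 * k + 1)) (by omega); omega
          have h0 : ((o (2 * (2 * k)) : ℕ) : ZMod N) = 0 := by
            rw [h, hNeq, ZMod.natCast_self]
          have h2 := congrArg ZMod.val h0
          rw [hval _ (holt _ (by omega)), ZMod.val_zero] at h2
          have h4 := homono (2 * (2 * k + 1)) (2 * (2 * k + 1) + 1) (by omega) (by omega)
          have h5 := holt (2 * (2 * k + 1) + 1) (by omega)
          omega
    have hyyD : ∀ k, 2 * k + 1 < 2 * s → ¬ (cycOn f).Adj (y (2 * k)) (y (2 * k + 1)) := by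
      intro k hk hadj
      rw [← hgf] at hadj
      rw [← hgy (2 * k) (by omega), ← hgy (2 * k + 1) (by omega)] at hadj
      have hne2 : ((o (2 * (2 * k) + 1) : ZMod N)) ≠ (o (2 * (2 * k + 1) + 1) : ZMod N) := by
        intro h
        have h2 := hcastinj _ _ (holt _ (by omega)) (holt _ (by omega)) h
        have h3 := homono (2 * (2 * k) + 1) (2 * (2 * k + 1) + 1) (by omega) (by omega)
        omega
      rcases (cycOn_adj_iff hginj _ _ hne2).1 hadj with h | h
      · rw [hcastsucc] at h
        have h2 := hcastinj _ _ (holt _ (by omega))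
          (by have := holt (2 * (2 * k + 1)) (by omega)
              have := homono (2 * (2 * k) + 1) (2 * (2 * k + 1)) (by omega) (by omega)
              omega) h
        have h3 := homono (2 * (2 * k) + 1) (2 * (2 * k + 1)) (by omega) (by omega)
        have h4 := homono (2 * (2 * k + 1)) (2 * (2 * k + 1) + 1) (by omega) (by omega)
        omega
      · rw [hcastsucc] at h
        by_cases hN1 : o (2 * (2 * k + 1) + 1) + 1 < N
        · have h2 := hcastinj _ _ (holt _ (by omega)) hN1 h
          have h3 := homono (2 * (2 * k) + 1) (2 * (2 * k + 1) + 1) (by omega) (by omega)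
          omega
        · have hNeq : o (2 * (2 * k + 1) + 1) + 1 = N := by
            have := holt (2 * (2 * k + 1) + 1) (by omega); omega
          have h0 : ((o (2 * (2 * k) + 1) : ℕ) : ZMod N) = 0 := by
            rw [h, hNeq, ZMod.natCast_self]
          have h2 := congrArg ZMod.val h0
          rw [hval _ (holt _ (by omega)), ZMod.val_zero] at h2
          have h4 := homono (2 * (2 * k)) (2 * (2 * k) + 1) (by omega) (by omega)
          omega
    -- J and the cycle are edge disjoint
    have hJD : ∀ u v, J.Adj u v → ¬ (cycOn f).Adj u v := by
      intro u v hJ hD'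
      have hu : u ∈ A ∪ B := by rw [← hfrange]; exact cycOn_adj_mem hD'
      have hv : v ∈ A ∪ B := by rw [← hfrange]; exact cycOn_adj_mem hD'.symm
      have hdu : degS J u = 1 := le_antisymm (hJdegAB u hu) (degS_pos hJ)
      have hdv : degS J v = 1 := le_antisymm (hJdegAB v hv) (degS_pos hJ.symm)
      have hadj : (starAB J).Adj u v := starAB_adj.2 ⟨hJ.ne, hdu, hdv, hJ.reachable⟩
      have hedge : s(u, v) ∈ (starAB J).edgeSet := hadj
      rw [hedges] at hedge
      rcases hedge with (⟨k, hk, he⟩ | ⟨k, hk, he⟩) | ⟨k, hk1, hk2, he⟩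
      · rcases Sym2.eq_iff.1 he with ⟨h1, h2⟩ | ⟨h1, h2⟩
        · exact hxxD k (by omega) (h1 ▸ h2 ▸ hD')
        · exact hxxD k (by omega) (h1 ▸ h2 ▸ hD'.symm)
      · rcases Sym2.eq_iff.1 he with ⟨h1, h2⟩ | ⟨h1, h2⟩
        · exact hyyD k (by omega) (h1 ▸ h2 ▸ hD')
        · exact hyyD k (by omega) (h1 ▸ h2 ▸ hD'.symm)
      · have hxe : J.Adj (x k) (y k) := by
          rcases Sym2.eq_iff.1 he with ⟨h1, h2⟩ | ⟨h1, h2⟩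
          · exact h1 ▸ h2 ▸ hJ
          · exact h1 ▸ h2 ▸ hJ.symm
        have hxA' := hxA k hk2
        have hyB' := hyB k hk2
        have hyB2 : y k ∈ ⋃ i, BB i := by rw [hB] at hyB'; exact hyB'.1
        have hxA2 : x k ∈ ⋃ i, AA i := by rw [hA] at hxA'; exact hxA'.1
        obtain ⟨jb, hjb⟩ := Set.mem_iUnion.1 hyB2
        obtain ⟨ja, hja⟩ := Set.mem_iUnion.1 hxA2
        rcases hBES2 (x k) (y k) hxe (Or.inl hxA') (Or.inr hyB') with
          ⟨-, h2⟩ | ⟨-, h2⟩ | ⟨h2, -⟩ | ⟨h2, -⟩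
        · exact Set.disjoint_left.1 (hABdisj i₂ jb) h2 hjb
        · exact Set.disjoint_left.1 (hABdisj i₁ jb) h2 hjb
        · exact Set.disjoint_left.1 (hABdisj ja i₃) hja h2
        · exact Set.disjoint_left.1 (hABdisj ja i₄) hja h2
    -- adjacency of the fictive pairs in the cycle
    have hDadj_xy : ∀ i, i < s' → (cycOn f).Adj (x i) (y i) := fun i hi =>
      hJsub ((hJstarAdj _ _).2 ⟨i, hi, Or.inl ⟨rfl, rfl⟩⟩)
    -- neighbourhoods in the cycle
    have hDnbr : ∀ v, v ∈ A ∪ B → ∃ t : ZMod N, g t = v ∧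
        (cycOn f).neighborSet v = {g (t - 1), g (t + 1)} ∧ g (t - 1) ≠ g (t + 1) := by
      intro v hv
      obtain ⟨t, rfl⟩ : v ∈ Set.range g := by rw [hgrange]; exact hv
      refine ⟨t, rfl, ?_, ?_⟩
      · rw [← hgf]; exact cycOn_nbr hginj hone t
      · intro hgg
        have h1 := hginj hgg
        have h2 : ((2 : ℕ) : ZMod N) = 0 := by push_cast; linear_combination -h1
        rw [ZMod.natCast_eq_zero_iff] at h2
        have := Nat.le_of_dvd (by norm_num) h2
        omega
    have hDdeg : ∀ v, v ∈ A ∪ B → degS (cycOn f) v = 2 := by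
      intro v hv
      obtain ⟨t, rfl, hnb, hne'⟩ := hDnbr v hv
      rw [degS, hnb, Set.ncard_pair hne']
    have hnotD : ∀ v, v ∈ AA 0 ∪ BB 0 → (cycOn f).neighborSet v = ∅ := by
      intro v hv
      ext u
      simp only [SimpleGraph.mem_neighborSet, Set.mem_empty_iff_false, iff_false]
      intro h
      exact hV0AB v hv (by rw [← hfrange]; exact cycOn_adj_mem h)
    have hJstarNbrx : ∀ i, i < s' → Jstar.neighborSet (x i) = {y i} := by
      intro i hi
      ext u
      simp only [SimpleGraph.mem_neighborSet, Set.mem_singleton_iff]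
      constructor
      · intro h
        obtain ⟨j, hj, (⟨h1, h2⟩ | ⟨h1, h2⟩)⟩ := (hJstarAdj _ _).1 h
        · have := hxinj (Set.mem_Iio.2 hi) (Set.mem_Iio.2 hj) h1
          rw [h2, ← this]
        · exact absurd h1 (hxy i j hi hj)
      · rintro rfl
        exact (hJstarAdj _ _).2 ⟨i, hi, Or.inl ⟨rfl, rfl⟩⟩
    have hJstarNbry : ∀ i, i < s' → Jstar.neighborSet (y i) = {x i} := by
      intro i hi
      ext u
      simp only [SimpleGraph.mem_neighborSet, Set.mem_singleton_iff]
      constructor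
      · intro h
        obtain ⟨j, hj, (⟨h1, h2⟩ | ⟨h1, h2⟩)⟩ := (hJstarAdj _ _).1 h
        · exact absurd h1.symm (hxy j i hj hi)
        · have := hyinj (Set.mem_Iio.2 hi) (Set.mem_Iio.2 hj) h1
          rw [h2, ← this]
      · rintro rfl
        exact (hJstarAdj _ _).2 ⟨i, hi, Or.inr ⟨rfl, rfl⟩⟩
    have hJstarNbr0 : ∀ v, (∀ i, i < s' → v ≠ x i ∧ v ≠ y i) → Jstar.neighborSet v = ∅ := by
      intro v hv
      ext u
      simp only [SimpleGraph.mem_neighborSet, Set.mem_empty_iff_false, iff_false]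
      intro h
      obtain ⟨j, hj, (⟨h1, -⟩ | ⟨h1, -⟩)⟩ := (hJstarAdj _ _).1 h
      · exact (hv j hj).1 h1
      · exact (hv j hj).2 h1
    -- neighbourhood of the union graph
    have hHnbr : ∀ v, ((cycOn f \ Jstar) ⊔ J).neighborSet v =
        ((cycOn f).neighborSet v \ Jstar.neighborSet v) ∪ J.neighborSet v := by
      intro v
      ext u
      simp only [SimpleGraph.mem_neighborSet, SimpleGraph.sup_adj, SimpleGraph.sdiff_adj,
        Set.mem_union, Set.mem_diff]
    have hdegH : ∀ v, degS ((cycOn f \ Jstar) ⊔ J) v = 2 := by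
      intro v
      rw [degS, hHnbr]
      have hdisj : Disjoint ((cycOn f).neighborSet v \ Jstar.neighborSet v)
          (J.neighborSet v) := by
        rw [Set.disjoint_left]
        intro u h1 h2
        exact hJD v u h2 h1.1
      rw [Set.ncard_union_eq hdisj (Set.toFinite _) (Set.toFinite _)]
      rcases hcover' v with h0 | h0
      · rw [hnotD v h0]
        have h2 := hBES1a v h0
        rw [degS] at h2
        rw [Set.empty_diff, Set.ncard_empty]
        omega
      · by_cases hX : ∃ i, i < s' ∧ (v = x i ∨ v = y i)
        · obtain ⟨i, hi, hvv⟩ := hX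
          rcases hvv with rfl | rfl
          · obtain ⟨t, ht, hnb, hnee⟩ := hDnbr (x i) h0
            rw [hnb, hJstarNbrx i hi]
            have hymem : y i ∈ ({g (t - 1), g (t + 1)} : Set V) := by
              rw [← hnb]; exact hDadj_xy i hi
            have hcard1 : (({g (t - 1), g (t + 1)} : Set V) \ {y i}).ncard = 1 := by
              rcases hymem with h | h
              · rw [h, Set.pair_diff_left hnee, Set.ncard_singleton]
              · rw [h, Set.pair_diff_right hnee, Set.ncard_singleton]
            rw [hcard1]
            have h9 := hxdeg i hi
            rw [degS] at h9
            omega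
          · obtain ⟨t, ht, hnb, hnee⟩ := hDnbr (y i) h0
            rw [hnb, hJstarNbry i hi]
            have hymem : x i ∈ ({g (t - 1), g (t + 1)} : Set V) := by
              rw [← hnb]; exact (hDadj_xy i hi).symm
            have hcard1 : (({g (t - 1), g (t + 1)} : Set V) \ {x i}).ncard = 1 := by
              rcases hymem with h | h
              · rw [h, Set.pair_diff_left hnee, Set.ncard_singleton]
              · rw [h, Set.pair_diff_right hnee, Set.ncard_singleton]
            rw [hcard1]
            have h9 := hydeg i hi
            rw [degS] at h9
            omega
        · push_neg at hX
          rw [hJstarNbr0 v (fun i hi => hX i hi)]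
          rw [Set.diff_empty]
          have hJ0 : J.neighborSet v = ∅ := by
            ext u
            simp only [SimpleGraph.mem_neighborSet, Set.mem_empty_iff_false, iff_false]
            intro h
            have h1 : degS J v = 1 := le_antisymm (hJdegAB v h0) (degS_pos h)
            obtain ⟨k, hk, hv'⟩ := hleafmem v h1
            rcases hv' with h2 | h2
            · exact (hX k hk).1 h2
            · exact (hX k hk).2 h2
          rw [hJ0, Set.ncard_empty]
          have := hDdeg v h0
          rw [degS] at this
          omega
    -- connectivity
    haveI : Nonempty V := ⟨x 0⟩
    have hsd : (cycOn f \ Jstar) ≤ (cycOn f \ Jstar) ⊔ J := le_sup_left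
    have hJH : J ≤ (cycOn f \ Jstar) ⊔ J := le_sup_right
    have harc : ∀ i, i + 1 < s' → (cycOn f \ Jstar).Reachable (y i) (x (i + 1)) := by
      intro i hi
      have hbound : o (2 * (i + 1)) < N := holt _ (by omega)
      have key : ∀ t, o (2 * i + 1) ≤ t → t ≤ o (2 * (i + 1)) →
          (cycOn f \ Jstar).Reachable (y i) (g (t : ZMod N)) := by
        intro t ht
        induction t, ht using Nat.le_induction with
        | base =>
          intro _
          rw [hgy i (by omega)]
        | succ t ht ih =>
          intro htop
          have ht2 : t + 1 < N := by omega
          have hreach := ih (by omega)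
          refine hreach.trans (SimpleGraph.Adj.reachable ?_)
          have hAd : (cycOn f).Adj (g (t : ZMod N)) (g ((t : ZMod N) + 1)) := by
            rw [← hgf]
            exact cycOn_adj_succ hginj hone (t : ZMod N)
          rw [SimpleGraph.sdiff_adj, ← hcastsucc t]
          constructor
          · exact hAd
          · intro hJs
            obtain ⟨j, hj, (⟨h1, h2⟩ | ⟨h1, h2⟩)⟩ := (hJstarAdj _ _).1 hJs
            · rw [hcastsucc t] at h2
              have e1 := hposx j hj t (by omega) h1
              have e2 := hposy j hj (t + 1) ht2 h2
              have c1 : 2 * i + 1 ≤ 2 * j := by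
                by_contra hc
                push_neg at hc
                have := homono (2 * j) (2 * i + 1) (by omega) (by omega)
                omega
              have c2 : 2 * j + 1 ≤ 2 * (i + 1) := by
                by_contra hc
                push_neg at hc
                have := homono (2 * (i + 1)) (2 * j + 1) (by omega) (by omega)
                omega
              omega
            · rw [hcastsucc t] at h2
              have e1 := hposy j hj t (by omega) h1
              have e2 := hposx j hj (t + 1) ht2 h2
              have := homono (2 * j) (2 * j + 1) (by omega) (by omega)
              omega
      have h2 := key (o (2 * (i + 1)))
        (by have := homono (2 * i + 1) (2 * (i + 1)) (by omega) (by omega); omega) le_rfl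
      rwa [hgx (i + 1) (by omega)] at h2
    have hxyconn : ∀ i, i < s' → ((cycOn f \ Jstar) ⊔ J).Reachable (x i) (y i) := by
      intro i hi
      rcases Nat.lt_or_ge i (2 * s) with h2 | h2
      · rcases Nat.even_or_odd i with ⟨k, hk⟩ | ⟨k, hk⟩
        · rw [show i = 2 * k by omega]
          have r1 := (hreachxx k (by omega)).mono hJH
          have r2 := (harc (2 * k) (by omega)).mono hsd
          exact r1.trans r2.symm
        · rw [show i = 2 * k + 1 by omega]
          have r1 := (harc (2 * k) (by omega)).mono hsd
          have r2 := (hreachyy k (by omega)).mono hJH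
          exact r1.symm.trans r2
      · exact (hreachxy i h2 hi).mono hJH
    have hX0 : ∀ j, j < s' → ((cycOn f \ Jstar) ⊔ J).Reachable (x 0) (x j) ∧
        ((cycOn f \ Jstar) ⊔ J).Reachable (x 0) (y j) := by
      intro j
      induction j with
      | zero => intro h0; exact ⟨SimpleGraph.Reachable.refl _, hxyconn 0 h0⟩
      | succ j ih =>
        intro hj
        obtain ⟨h1, h2⟩ := ih (by omega)
        have r1 := h2.trans ((harc j hj).mono hsd)
        exact ⟨r1, r1.trans (hxyconn (j + 1) hj)⟩
    have hstepH : ∀ k : ZMod N, ((cycOn f \ Jstar) ⊔ J).Reachable (x 0) (g k) →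
        ((cycOn f \ Jstar) ⊔ J).Reachable (x 0) (g (k + 1)) := by
      intro k hk
      by_cases hJs : Jstar.Adj (g k) (g (k + 1))
      · obtain ⟨j, hj, (⟨h1, h2⟩ | ⟨h1, h2⟩)⟩ := (hJstarAdj _ _).1 hJs
        · rw [h2]; exact (hX0 j hj).2
        · rw [h2]; exact (hX0 j hj).1
      · refine hk.trans (SimpleGraph.Adj.reachable (hsd ?_))
        rw [SimpleGraph.sdiff_adj]
        refine ⟨?_, hJs⟩
        rw [← hgf]
        exact cycOn_adj_succ hginj hone k
    have hgreach : ∀ t : ℕ, ((cycOn f \ Jstar) ⊔ J).Reachable (x 0) (g ((o 0 : ZMod N) + t)) := by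
      intro t
      induction t with
      | zero =>
        simp only [Nat.cast_zero, add_zero]
        have h1 := hgx 0 hs'pos
        rw [show 2 * 0 = 0 by omega] at h1
        rw [h1]
      | succ t ih =>
        have h1 := hstepH _ ih
        rwa [show ((o 0 : ZMod N) + t) + 1 = (o 0 : ZMod N) + ((t + 1 : ℕ) : ZMod N) by
          push_cast; ring] at h1
    have hreachAB : ∀ v, v ∈ A ∪ B → ((cycOn f \ Jstar) ⊔ J).Reachable (x 0) v := by
      intro v hv
      obtain ⟨k, rfl⟩ : v ∈ Set.range g := by rw [hgrange]; exact hv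
      have h1 := hgreach ((k - (o 0 : ZMod N)).val)
      rw [ZMod.natCast_val, ZMod.cast_id] at h1
      rwa [show ((o 0 : ZMod N) + (k - (o 0 : ZMod N))) = k from by ring] at h1
    have hreachAll : ∀ v : V, ((cycOn f \ Jstar) ⊔ J).Reachable (x 0) v := by
      intro v
      rcases hcover' v with h0 | h0
      · have hd := hBES1a v h0
        obtain ⟨z, hzv, hz1, hre⟩ := reach_leaf J hps1 hps2 v (by omega)
        obtain ⟨k, hk, hz⟩ := hleafmem z hz1
        have r1 := hre.mono hJH
        rcases hz with rfl | rfl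
        · exact (hX0 k hk).1.trans r1.symm
        · exact (hX0 k hk).2.trans r1.symm
      · exact hreachAB v h0
    have hpre : ((cycOn f \ Jstar) ⊔ J).Preconnected :=
      fun u v => (hreachAll u).symm.trans (hreachAll v)
    exact ham_of_two_regular_connected _ hpre hdegH
end
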